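/- arXiv:1305.1659 — 5 statements merged into one kernel-verified Lean document; each statement's English description precedes it below -/
import Mathlib

section
/- The matrix h₁ := h₀⁻¹·h∞⁻¹ is given explicitly by: (h₁)_{1,1} = (−1)^r B_Q; (h₁)_{i,1} = (−1)^r (B_{Q−i+1} − A_{Q−i+1}) for 2 ≤ i ≤ Q; and (h₁)_{i,j} = δ_{ij} (Kronecker delta) for all i and all j with 2 ≤ j ≤ Q. -/
open Polynomial Matrix

def compMat (Q : ℕ) (A : ℕ → ℤ) : Matrix (Fin Q) (Fin Q) ℤ :=
  Matrix.of fun i j =>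
    if (j : ℕ) + 1 = Q then -A (Q - (i : ℕ))
    else if (i : ℕ) = (j : ℕ) + 1 then 1 else 0

def invMat (Q r : ℕ) (A : ℕ → ℤ) : Matrix (Fin Q) (Fin Q) ℤ :=
  Matrix.of fun i j =>
    if (j : ℕ) = 0 then
      (if (i : ℕ) + 1 = Q then (-1) ^ (r + 1) else (-1) ^ (r + 1) * A (Q - 1 - (i : ℕ)))
    else if (i : ℕ) + 1 = (j : ℕ) then 1 else 0

lemma constCoeff_eq (r Q : ℕ) (hQ : 0 < Q) (d : Fin r → ℕ) (hd : ∀ k, 0 < d k) (A : ℕ → ℤ)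
    (hA : ∏ k, ((X : ℤ[X]) ^ d k - 1)
      = X ^ Q + ∑ i ∈ Finset.Icc 1 Q, C (A i) * X ^ (Q - i)) :
    A Q = (-1) ^ r := by
  have h := congrArg (Polynomial.eval 0) hA
  simp only [eval_prod, eval_add, eval_pow, eval_sub, eval_one, eval_X, eval_finset_sum,
    eval_mul, eval_C] at h
  rw [Finset.sum_eq_single Q (fun i hi hne => ?_)
    (fun h' => absurd (Finset.mem_Icc.mpr ⟨hQ, le_refl Q⟩) h')] at h
  · rw [Nat.sub_self, pow_zero, mul_one, zero_pow hQ.ne', zero_add] at h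
    rw [← h, Finset.prod_congr rfl fun k _ => by rw [zero_pow (hd k).ne', zero_sub]]
    simp
  · rw [zero_pow (Nat.sub_ne_zero_of_lt
      (lt_of_le_of_ne (Finset.mem_Icc.mp hi).2 hne)), mul_zero]

lemma mul_invMat (Q r : ℕ) (P A : ℕ → ℤ) (i j : Fin Q) :
    (compMat Q P * invMat Q r A) i j =
      if (j : ℕ) = 0 then
        (if (i : ℕ) = 0 then 0 else (-1) ^ (r + 1) * A (Q - (i : ℕ)))
          + (-1) ^ r * P (Q - (i : ℕ))
      else if (i : ℕ) = (j : ℕ) then 1 else 0 := by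
  have hQ : 0 < Q := i.pos
  rw [Matrix.mul_apply]
  by_cases hj0 : (j : ℕ) = 0
  · simp only [hj0, if_true]
    set L : Fin Q := ⟨Q - 1, by omega⟩ with hL
    rw [← Finset.sum_erase_add _ _ (Finset.mem_univ L)]
    have hLval : (L : ℕ) + 1 = Q := by simp [hL]; omega
    have hterm : compMat Q P i L * invMat Q r A L j
        = (-1) ^ r * P (Q - (i : ℕ)) := by
      simp only [compMat, invMat, Matrix.of_apply, hLval, if_true, hj0]
      ring
    rw [hterm]
    congr 1
    by_cases hi0 : (i : ℕ) = 0
    · rw [if_pos hi0]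
      apply Finset.sum_eq_zero
      intro k hk
      have hkL : (k : ℕ) + 1 ≠ Q := by
        intro h
        exact (Finset.mem_erase.mp hk).1 (Fin.ext (by omega))
      simp only [compMat, invMat, Matrix.of_apply, hkL, if_false, hi0]
      rw [if_neg (by omega), zero_mul]
    · rw [if_neg hi0]
      have hiQ : (i : ℕ) < Q := i.isLt
      set K : Fin Q := ⟨(i : ℕ) - 1, by omega⟩ with hK
      have hKmem : K ∈ Finset.univ.erase L := by
        refine Finset.mem_erase.mpr ⟨?_, Finset.mem_univ _⟩
        intro h
        have : (i : ℕ) - 1 = Q - 1 := congrArg Fin.val h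
        omega
      rw [Finset.sum_eq_single_of_mem K hKmem (fun k hk hne => ?_)]
      · have h1 : ¬ ((K : ℕ) + 1 = Q) := by simp [hK]; omega
        have h2 : (i : ℕ) = (K : ℕ) + 1 := by simp [hK]; omega
        have h3 : Q - 1 - (K : ℕ) = Q - (i : ℕ) := by simp [hK]; omega
        simp only [compMat, invMat, Matrix.of_apply]
        rw [if_neg h1, if_pos h2, if_pos hj0, if_neg h1, one_mul, h3]
      · have hkL : (k : ℕ) + 1 ≠ Q := by
          intro h
          exact (Finset.mem_erase.mp hk).1 (Fin.ext (by omega))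
        have hik : ¬ ((i : ℕ) = (k : ℕ) + 1) := by
          intro h
          exact hne (Fin.ext (by simp [hK]; omega))
        simp only [compMat, Matrix.of_apply, hkL, if_false, hik, if_false]
        rw [zero_mul]
  · rw [if_neg hj0]
    set K : Fin Q := ⟨(j : ℕ) - 1, by omega⟩ with hK
    rw [Finset.sum_eq_single K (fun k hk hne => ?_) (fun h => absurd (Finset.mem_univ K) h)]
    · have h1 : ¬ ((K : ℕ) + 1 = Q) := by have := j.isLt; simp [hK]; omega
      have h2 : (K : ℕ) + 1 = (j : ℕ) := by simp [hK]; omega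
      have h3 : ((i : ℕ) = (K : ℕ) + 1) ↔ ((i : ℕ) = (j : ℕ)) := by omega
      simp only [compMat, invMat, Matrix.of_apply]
      rw [if_neg h1, if_neg hj0, if_pos h2, mul_one]
      exact if_congr h3 rfl rfl
    · have hkj : ¬ ((k : ℕ) + 1 = (j : ℕ)) := by
        intro h
        exact hne (Fin.ext (by simp [hK]; omega))
      simp only [invMat, Matrix.of_apply, hj0, if_false, hkj, if_false]
      rw [mul_zero]

/-- Explicit form of `h₁ = h₀⁻¹ · h∞⁻¹`: its first column is
`((-1)^r B_Q, (-1)^r (B_{Q-1} - A_{Q-1}), …, (-1)^r (B_1 - A_1))ᵀ` and the remaining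
columns agree with those of the identity matrix.  Here `h∞ = compMat Q A` and
`h₀⁻¹ = compMat Q B`. -/
theorem h1_explicit
    (N r Q : ℕ) (q : Fin (N + 1) → ℕ) (d : Fin r → ℕ)
    (hq : ∀ ν, 0 < q ν) (hd : ∀ k, 0 < d k)
    (hQq : Q = ∑ ν, q ν) (hQd : Q = ∑ k, d k)
    (A B : ℕ → ℤ)
    (hA : ∏ k, ((X : ℤ[X]) ^ d k - 1)
      = X ^ Q + ∑ i ∈ Finset.Icc 1 Q, C (A i) * X ^ (Q - i))
    (hB : ∏ ν, ((X : ℤ[X]) ^ q ν - 1)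
      = X ^ Q + ∑ i ∈ Finset.Icc 1 Q, C (B i) * X ^ (Q - i)) :
    ∀ i j : Fin Q,
      (compMat Q B * (compMat Q A)⁻¹) i j =
        if (j : ℕ) = 0 then
          (if (i : ℕ) = 0 then (-1) ^ r * B Q
           else (-1) ^ r * (B (Q - (i : ℕ)) - A (Q - (i : ℕ))))
        else (if i = j then 1 else 0) := by
  intro i j
  have hQ : 0 < Q := i.pos
  have hAQ : A Q = (-1) ^ r := constCoeff_eq r Q hQ d hd A hA
  have hinv : (compMat Q A)⁻¹ = invMat Q r A := by
    apply Matrix.inv_eq_right_inv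
    ext i' j'
    rw [mul_invMat, Matrix.one_apply]
    by_cases hj0 : (j' : ℕ) = 0
    · rw [if_pos hj0]
      by_cases hi0 : (i' : ℕ) = 0
      · rw [if_pos hi0, if_pos (Fin.ext (by omega)), hi0, Nat.sub_zero, hAQ]
        have he : Even (r + r) := ⟨r, rfl⟩
        rw [zero_add, ← pow_add, he.neg_one_pow]
      · rw [if_neg hi0, if_neg (fun h => hi0 (by rw [h]; exact hj0)), pow_succ]
        ring
    · rw [if_neg hj0]
      by_cases h : (i' : ℕ) = (j' : ℕ)
      · rw [if_pos h, if_pos (Fin.ext h)]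
      · rw [if_neg h, if_neg (fun hh => h (congrArg Fin.val hh))]
  rw [hinv, mul_invMat]
  by_cases hj0 : (j : ℕ) = 0
  · rw [if_pos hj0, if_pos hj0]
    by_cases hi0 : (i : ℕ) = 0
    · rw [if_pos hi0, if_pos hi0, hi0, Nat.sub_zero, zero_add]
    · rw [if_neg hi0, if_neg hi0, pow_succ]
      ring
  · rw [if_neg hj0, if_neg hj0]
    by_cases h : (i : ℕ) = (j : ℕ)
    · rw [if_pos h, if_pos (Fin.ext h)]
    · rw [if_neg h, if_neg (fun hh => h (congrArg Fin.val hh))]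
end

section
/- Assume N − r is even. Then every Q×Q complex matrix X satisfying h·X·hᵀ = X for all h in the hypergeometric group H_{q,d} satisfies X_{i,1} = −(1/2)·(h₁)_{i,1}·X_{1,1} for all 2 ≤ i ≤ Q, where h₁ = h₀⁻¹·h∞⁻¹. -/
open Polynomial Matrix

/-- Constant coefficient extraction: `A Q` is the constant coefficient of the product. -/
lemma hyp_constant_coeff {ι : Type*} [Fintype ι] (Q : ℕ) (hQ : 0 < Q) (d : ι → ℕ)
    (hd : ∀ k, 0 < d k) (A : ℕ → ℤ)
    (hA : ∏ k, ((X : ℤ[X]) ^ d k - 1)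
      = X ^ Q + ∑ i ∈ Finset.Icc 1 Q, C (A i) * X ^ (Q - i)) :
    A Q = (-1) ^ (Fintype.card ι) := by
  have h := congrArg (Polynomial.eval 0) hA
  rw [eval_prod] at h
  rw [Finset.prod_congr rfl (fun k _ => by simp [zero_pow (hd k).ne'] :
    ∀ k ∈ Finset.univ, eval 0 ((X : ℤ[X]) ^ d k - 1) = -1)] at h
  rw [Finset.prod_const, Finset.card_univ] at h
  rw [eval_add, eval_pow, eval_X, zero_pow hQ.ne', eval_finset_sum] at h
  rw [Finset.sum_eq_single Q (fun i hi hne => by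
      have : Q - i ≠ 0 := by simp [Finset.mem_Icc] at hi; omega
      simp [zero_pow this])
    (fun h' => absurd (Finset.mem_Icc.mpr ⟨hQ, le_refl Q⟩) h')] at h
  simp at h
  omega

/-- The pseudo-reflection identity: `(1 + w vᵀ) · compMat A = compMat B`. -/
lemma hyp_reflection_mul (Q : ℕ) (hQ : 0 < Q) (A B : ℕ → ℤ) (hsq : A Q * A Q = 1) :
    ((1 : Matrix (Fin Q) (Fin Q) ℤ) +
      vecMulVec (fun i : Fin Q => A (Q - (i:ℕ)) - B (Q - (i:ℕ)))
        (fun j : Fin Q => if (j : ℕ) = 0 then -A Q else 0)) * compMat Q A = compMat Q B := by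
  ext i j
  rw [Matrix.add_mul, Matrix.one_mul, Matrix.add_apply, Matrix.mul_apply]
  rw [Finset.sum_eq_single (⟨0, hQ⟩ : Fin Q)
    (fun k _ hk => by
      have : (k : ℕ) ≠ 0 := fun h => hk (Fin.ext h)
      simp [vecMulVec_apply, this])
    (fun h' => absurd (Finset.mem_univ _) h')]
  simp only [vecMulVec_apply, compMat, of_apply]
  by_cases hj : (j : ℕ) + 1 = Q
  · simp only [hj, if_true]
    simp only [if_true, Nat.sub_zero, eq_self_iff_true]
    linear_combination (A (Q - (i:ℕ)) - B (Q - (i:ℕ))) * hsq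
  · simp [hj]

/-- If `N - r` is even, any matrix invariant under the hypergeometric group `H_{q,d}`
satisfies `X_{i,1} = -(1/2)·(h₁)_{i,1}·X_{1,1}` for `2 ≤ i ≤ Q`, where `h₁ = h₀⁻¹·h∞⁻¹`. -/
theorem invariant_first_column_even_case
    (N r Q : ℕ) (hQ : 0 < Q) (q : Fin (N + 1) → ℕ) (d : Fin r → ℕ)
    (hq : ∀ ν, 0 < q ν) (hd : ∀ k, 0 < d k)
    (hQq : Q = ∑ ν, q ν) (hQd : Q = ∑ k, d k)
    (A B : ℕ → ℤ)
    (hA : ∏ k, ((X : ℤ[X]) ^ d k - 1)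
      = X ^ Q + ∑ i ∈ Finset.Icc 1 Q, C (A i) * X ^ (Q - i))
    (hB : ∏ ν, ((X : ℤ[X]) ^ q ν - 1)
      = X ^ Q + ∑ i ∈ Finset.Icc 1 Q, C (B i) * X ^ (Q - i))
    (ginf g0inv : GL (Fin Q) ℤ)
    (hginf : (ginf : Matrix (Fin Q) (Fin Q) ℤ) = compMat Q A)
    (hg0inv : (g0inv : Matrix (Fin Q) (Fin Q) ℤ) = compMat Q B)
    (hparity : Even ((N : ℤ) - (r : ℤ)))
    (Xm : Matrix (Fin Q) (Fin Q) ℂ)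
    (hXm : ∀ h ∈ Subgroup.closure ({ginf, g0inv} : Set (GL (Fin Q) ℤ)),
      ((h : Matrix (Fin Q) (Fin Q) ℤ).map (Int.cast : ℤ → ℂ)) * Xm
        * ((h : Matrix (Fin Q) (Fin Q) ℤ).map (Int.cast : ℤ → ℂ))ᵀ = Xm) :
    ∀ i : Fin Q, 1 ≤ (i : ℕ) →
      Xm i ⟨0, hQ⟩ =
        -(1/2) * (((compMat Q B * (compMat Q A)⁻¹) i ⟨0, hQ⟩ : ℤ) : ℂ)
          * Xm ⟨0, hQ⟩ ⟨0, hQ⟩ := by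
  -- constant coefficients
  have hAQ : A Q = (-1) ^ r := by
    simpa using hyp_constant_coeff Q hQ d hd A hA
  have hBQ' : B Q = (-1) ^ (N + 1) := by
    simpa using hyp_constant_coeff Q hQ q hq B hB
  have hsq : A Q * A Q = 1 := by
    rw [hAQ, ← pow_add]
    exact Even.neg_one_pow ⟨r, rfl⟩
  -- parity: B Q = -A Q
  have hNr : (-1 : ℤ) ^ N = (-1) ^ r := by
    have h2 : Even (N : ℤ) ↔ Even (r : ℤ) := Int.even_sub.mp hparity
    rcases Nat.even_or_odd N with he | ho
    · have hr : Even r := by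
        have : Even (r : ℤ) := h2.mp (by exact_mod_cast he)
        exact_mod_cast this
      rw [he.neg_one_pow, hr.neg_one_pow]
    · have hr : Odd r := by
        rw [← Nat.not_even_iff_odd]
        intro hre
        have : Even (N : ℤ) := h2.mpr (by exact_mod_cast hre)
        exact (Nat.not_even_iff_odd.mpr ho) (by exact_mod_cast this)
      rw [ho.neg_one_pow, hr.neg_one_pow]
  have hBQ : B Q = -A Q := by
    rw [hAQ, hBQ', pow_succ, hNr]; ring
  -- the pseudo-reflection h₁
  set k0 : Fin Q := ⟨0, hQ⟩ with hk0
  set w : Fin Q → ℤ := fun i : Fin Q => A (Q - (i:ℕ)) - B (Q - (i:ℕ)) with hw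
  set v : Fin Q → ℤ := fun j : Fin Q => if (j : ℕ) = 0 then -A Q else 0 with hv
  set H : Matrix (Fin Q) (Fin Q) ℤ := 1 + vecMulVec w v with hHdef
  have hmul : H * compMat Q A = compMat Q B := hyp_reflection_mul Q hQ A B hsq
  have hunitC : IsUnit (compMat Q A) := hginf ▸ ginf.isUnit
  have hdet : IsUnit (compMat Q A).det := (Matrix.isUnit_iff_isUnit_det _).mp hunitC
  have hH : compMat Q B * (compMat Q A)⁻¹ = H := by
    rw [← hmul, Matrix.mul_assoc, Matrix.mul_nonsing_inv _ hdet, Matrix.mul_one]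
  -- the group element h₁ = g0inv * ginf⁻¹
  have hmem : g0inv * ginf⁻¹ ∈ Subgroup.closure ({ginf, g0inv} : Set (GL (Fin Q) ℤ)) :=
    mul_mem (Subgroup.subset_closure (by simp)) (inv_mem (Subgroup.subset_closure (by simp)))
  have hcoe : ((g0inv * ginf⁻¹ : GL (Fin Q) ℤ) : Matrix (Fin Q) (Fin Q) ℤ) = H := by
    rw [Units.val_mul, Matrix.coe_units_inv, hginf, hg0inv, hH]
  have key : (H.map (Int.cast : ℤ → ℂ)) * Xm * (H.map (Int.cast : ℤ → ℂ))ᵀ = Xm := by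
    have := hXm _ hmem
    rwa [hcoe] at this
  -- entry structure of H
  have h0row : ∀ l : Fin Q, H k0 l = if l = k0 then -1 else 0 := by
    intro l
    by_cases hl : l = k0
    · subst hl
      simp only [hHdef, Matrix.add_apply, Matrix.one_apply_eq, vecMulVec_apply, hw, hv, hk0]
      simp only [Nat.sub_zero, if_true]
      linear_combination -2 * hsq + (A Q) * hBQ
    · have hl' : (l : ℕ) ≠ 0 := fun h => hl (Fin.ext h)
      simp [hHdef, Matrix.one_apply, vecMulVec_apply, hv, hl', Ne.symm hl, hl]
  intro i hi1
  have hik0 : i ≠ k0 := fun h => by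
    have := congrArg Fin.val h
    simp only [hk0] at this
    omega
  have hirow : ∀ k : Fin Q, H i k = (if i = k then 1 else 0) + (if k = k0 then H i k0 else 0) := by
    intro k
    by_cases hk : k = k0
    · subst hk
      simp [if_neg hik0]
    · have hk' : (k : ℕ) ≠ 0 := fun h => hk (Fin.ext h)
      simp [hHdef, Matrix.one_apply, vecMulVec_apply, hv, hk', hk]
  set Hc := H.map (Int.cast : ℤ → ℂ) with hHc
  have step : (Hc * Xm * Hcᵀ) i k0 = -((Hc * Xm) i k0) := by
    rw [Matrix.mul_apply]
    rw [Finset.sum_congr rfl (fun l _ => by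
      rw [Matrix.transpose_apply, hHc, Matrix.map_apply, h0row l]
      split <;> simp :
      ∀ l ∈ Finset.univ, (Hc * Xm) i l * Hcᵀ l k0
        = if l = k0 then -((Hc * Xm) i l) else 0)]
    rw [Finset.sum_ite_eq' Finset.univ k0 (fun l => -((Hc * Xm) i l))]
    simp
  have step2 : (Hc * Xm) i k0 = ((H i k0 : ℤ) : ℂ) * Xm k0 k0 + Xm i k0 := by
    rw [Matrix.mul_apply]
    rw [Finset.sum_congr rfl (fun k _ => by
      by_cases hk : k = k0
      · have hik : ¬ i = k := by rw [hk]; exact hik0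
        rw [hHc, Matrix.map_apply, hirow k, if_pos hk, if_neg hik, if_pos hk, if_neg hik]
        push_cast; ring
      · rw [hHc, Matrix.map_apply, hirow k, if_neg hk, if_neg hk]
        by_cases hik : i = k
        · rw [if_pos hik, if_pos hik]; push_cast; ring
        · rw [if_neg hik, if_neg hik]; push_cast; ring :
      ∀ k ∈ Finset.univ, Hc i k * Xm k k0
        = (if i = k then Xm k k0 else 0) + (if k = k0 then ((H i k0 : ℤ) : ℂ) * Xm k k0 else 0))]
    rw [Finset.sum_add_distrib, Finset.sum_ite_eq Finset.univ i (fun k => Xm k k0),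
      Finset.sum_ite_eq' Finset.univ k0 (fun k => ((H i k0 : ℤ) : ℂ) * Xm k k0)]
    simp [add_comm]
  have e : -(((H i k0 : ℤ) : ℂ) * Xm k0 k0 + Xm i k0) = Xm i k0 := by
    have := congrFun (congrFun key i) k0
    rw [step, step2] at this
    exact this
  rw [hH]
  linear_combination (-(1/2 : ℂ)) * e
end

section
/- Assume N − r is odd, and let X be a Q×Q complex matrix satisfying h·X·hᵀ = X for all h in the hypergeometric group H_{q,d}. Set h₁ = h₀⁻¹·h∞⁻¹. Then for every index j with 2 ≤ j ≤ Q and every i with 2 ≤ i ≤ Q, one has (h₁)_{i,1}·X_{1,j} + (h₁)_{j,1}·X_{i,1} = 0. In particular, if (h₁)_{j,1} = (−1)^r(B_{Q−j+1} − A_{Q−j+1}) ≠ 0 for some j ≥ 2, then X_{i,1} = −((h₁)_{i,1}/(h₁)_{j,1})·X_{1,j} for all 2 ≤ i ≤ Q. -/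
open Polynomial Matrix

/-- Constant term of `∏ (X^{d k} - 1)`: it equals `(-1)^r`, so `A Q = (-1)^r`. -/
lemma hyp_constant_term {r Q : ℕ} (hQ : 0 < Q) (d : Fin r → ℕ) (hd : ∀ k, 0 < d k)
    (A : ℕ → ℤ)
    (hA : ∏ k, ((X : ℤ[X]) ^ d k - 1)
      = X ^ Q + ∑ i ∈ Finset.Icc 1 Q, C (A i) * X ^ (Q - i)) :
    A Q = (-1) ^ r := by
  have h := congrArg (Polynomial.eval 0) hA
  rw [eval_prod] at h
  simp only [eval_add, eval_pow, eval_X, eval_finset_sum, eval_mul, eval_C, eval_sub,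
    eval_one] at h
  rw [Finset.prod_congr rfl (fun k _ => by rw [zero_pow (hd k).ne']),
    zero_pow hQ.ne'] at h
  have hsum : (∑ i ∈ Finset.Icc 1 Q, A i * (0 : ℤ) ^ (Q - i)) = A Q := by
    rw [Finset.sum_eq_single Q]
    · simp
    · intro i hi hne
      rw [Finset.mem_Icc] at hi
      rw [zero_pow (by omega), mul_zero]
    · intro hmem
      exact absurd (Finset.mem_Icc.2 ⟨hQ, le_refl Q⟩) hmem
  rw [hsum, zero_add, Finset.prod_const, Finset.card_univ, Fintype.card_fin] at h
  have h01 : (0 : ℤ) - 1 = -1 := by ring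
  rw [h01] at h
  exact h.symm

/-- Multiplying a square matrix on the left by the "row operation" matrix
`E = 1 + (c - e_z) ⊗ e_zᵀ` (i.e. `E p l = if l = z then c p else δ_{p l}`). -/
lemma rowop_mul {n : Type*} [Fintype n] [DecidableEq n] {R : Type*} [CommRing R]
    (z : n) (c : n → R) (M : Matrix n n R) (p j : n) :
    ((Matrix.of fun p l => if l = z then c p else if p = l then (1 : R) else 0) * M) p j
      = c p * M z j + (if p = z then 0 else M p j) := by
  by_cases hpz : p = z
  · subst hpz
    rw [Matrix.mul_apply]
    rw [Finset.sum_eq_single p]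
    · simp
    · intro l _ hl
      simp only [Matrix.of_apply, if_neg hl, if_neg (fun h : p = l => hl h.symm), zero_mul]
    · simp
  · rw [Matrix.mul_apply, ← Finset.add_sum_erase _ _ (Finset.mem_univ z)]
    simp only [Matrix.of_apply, if_pos rfl, if_neg hpz]
    congr 1
    rw [Finset.sum_eq_single_of_mem p (Finset.mem_erase.2 ⟨hpz, Finset.mem_univ p⟩)]
    · simp [hpz]
    · intro l hl hlp
      have hlz : l ≠ z := (Finset.mem_erase.1 hl).1
      simp only [Matrix.of_apply, if_neg hlz, if_neg (fun h : p = l => hlp (h ▸ rfl)), zero_mul]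

lemma mul_colop {n : Type*} [Fintype n] [DecidableEq n] {R : Type*} [CommRing R]
    (z : n) (c : n → R) (M : Matrix n n R) (p j : n) :
    (M * (Matrix.of fun p l => if l = z then c p else if p = l then (1 : R) else 0)ᵀ) p j
      = c j * M p z + (if j = z then 0 else M p j) := by
  have h2 : M * (Matrix.of fun p l => if l = z then c p else if p = l then (1 : R) else 0)ᵀ
      = ((Matrix.of fun p l => if l = z then c p else if p = l then (1 : R) else 0) * Mᵀ)ᵀ := by
    rw [Matrix.transpose_mul, Matrix.transpose_transpose]
  rw [h2, Matrix.transpose_apply, rowop_mul z c Mᵀ j p]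
  simp [Matrix.transpose_apply]

/-- If `N - r` is odd and `X` is invariant under the hypergeometric group `H_{q,d}`,
then `(h₁)_{i,1}·X_{1,j} + (h₁)_{j,1}·X_{i,1} = 0` for all `2 ≤ i, j ≤ Q`,
where `h₁ = h₀⁻¹·h∞⁻¹`; in particular if `(h₁)_{j,1} ≠ 0` for some `j ≥ 2`, then
`X_{i,1} = -((h₁)_{i,1}/(h₁)_{j,1})·X_{1,j}` for all `2 ≤ i ≤ Q`. -/
theorem invariant_first_column_odd_case
    (N r Q : ℕ) (hQ : 0 < Q) (q : Fin (N + 1) → ℕ) (d : Fin r → ℕ)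
    (hq : ∀ ν, 0 < q ν) (hd : ∀ k, 0 < d k)
    (hQq : Q = ∑ ν, q ν) (hQd : Q = ∑ k, d k)
    (A B : ℕ → ℤ)
    (hA : ∏ k, ((X : ℤ[X]) ^ d k - 1)
      = X ^ Q + ∑ i ∈ Finset.Icc 1 Q, C (A i) * X ^ (Q - i))
    (hB : ∏ ν, ((X : ℤ[X]) ^ q ν - 1)
      = X ^ Q + ∑ i ∈ Finset.Icc 1 Q, C (B i) * X ^ (Q - i))
    (ginf g0inv : GL (Fin Q) ℤ)
    (hginf : (ginf : Matrix (Fin Q) (Fin Q) ℤ) = compMat Q A)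
    (hg0inv : (g0inv : Matrix (Fin Q) (Fin Q) ℤ) = compMat Q B)
    (hparity : Odd ((N : ℤ) - (r : ℤ)))
    (Xm : Matrix (Fin Q) (Fin Q) ℂ)
    (hXm : ∀ h ∈ Subgroup.closure ({ginf, g0inv} : Set (GL (Fin Q) ℤ)),
      ((h : Matrix (Fin Q) (Fin Q) ℤ).map (Int.cast : ℤ → ℂ)) * Xm
        * ((h : Matrix (Fin Q) (Fin Q) ℤ).map (Int.cast : ℤ → ℂ))ᵀ = Xm) :
    (∀ i j : Fin Q, 1 ≤ (i : ℕ) → 1 ≤ (j : ℕ) →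
      (((compMat Q B * (compMat Q A)⁻¹) i ⟨0, hQ⟩ : ℤ) : ℂ) * Xm ⟨0, hQ⟩ j
        + (((compMat Q B * (compMat Q A)⁻¹) j ⟨0, hQ⟩ : ℤ) : ℂ) * Xm i ⟨0, hQ⟩ = 0)
    ∧ (∀ j : Fin Q, 1 ≤ (j : ℕ) →
        (((compMat Q B * (compMat Q A)⁻¹) j ⟨0, hQ⟩ : ℤ) : ℂ) ≠ 0 →
        ∀ i : Fin Q, 1 ≤ (i : ℕ) →
          Xm i ⟨0, hQ⟩ =
            -((((compMat Q B * (compMat Q A)⁻¹) i ⟨0, hQ⟩ : ℤ) : ℂ)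
                / (((compMat Q B * (compMat Q A)⁻¹) j ⟨0, hQ⟩ : ℤ) : ℂ))
              * Xm ⟨0, hQ⟩ j) := by
  -- constant terms
  have hAQ : A Q = (-1) ^ r := hyp_constant_term hQ d hd A hA
  have hBQ : B Q = (-1) ^ (N + 1) := hyp_constant_term hQ q hq B hB
  have hAB : A Q = B Q := by
    rw [hAQ, hBQ]
    obtain ⟨m, hm⟩ := hparity
    have hev : Even ((N : ℤ) + 1 + r) := ⟨m + 1 + r, by linarith⟩
    have h1 : ((-1 : ℤ)) ^ ((N : ℕ) + 1 + r) = 1 := by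
      apply Even.neg_one_pow
      have : ((N : ℤ) + 1 + r) = ((N + 1 + r : ℕ) : ℤ) := by push_cast; ring
      rwa [this, Int.even_coe_nat] at hev
    have h2 : ((-1 : ℤ)) ^ (N + 1) * (-1) ^ r = 1 := by rw [← pow_add]; exact h1
    have h3 : ((-1 : ℤ)) ^ r * (-1) ^ r = 1 := by
      rw [← pow_add]; exact Even.neg_one_pow ⟨r, rfl⟩
    exact mul_right_cancel₀ (pow_ne_zero r (by norm_num : (-1 : ℤ) ≠ 0)) (h3.trans h2.symm) 
  have hAA : A Q * A Q = 1 := by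
    rw [hAQ, ← pow_add]; exact Even.neg_one_pow ⟨r, rfl⟩
  set z : Fin Q := ⟨0, hQ⟩ with hz
  set cc : Fin Q → ℤ := fun p =>
    if p = z then 1 else A Q * (B (Q - (p : ℕ)) - A (Q - (p : ℕ))) with hcc
  set G' : Matrix (Fin Q) (Fin Q) ℤ :=
    Matrix.of fun p l => if l = z then cc p else if p = l then (1 : ℤ) else 0 with hG'
  -- G' * compMat Q A = compMat Q B
  have hG'A : G' * compMat Q A = compMat Q B := by
    ext p j
    rw [hG', rowop_mul z cc (compMat Q A) p j]
    have hz0 : ((z : Fin Q) : ℕ) = 0 := rfl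
    simp only [compMat, Matrix.of_apply, hz0]
    by_cases hj : (j : ℕ) + 1 = Q <;> by_cases hp : p = z
    · have hp0 : (p : ℕ) = 0 := by rw [hp]
      simp only [if_pos hj, hcc, if_pos hp, hp0]
      simp only [Nat.sub_zero]
      linarith [hAB]
    · simp only [if_pos hj, hcc, if_neg hp]
      simp only [Nat.sub_zero]
      linear_combination (A (Q - (p:ℕ)) - B (Q - (p:ℕ))) * hAA
    · have hp0 : (p : ℕ) = 0 := by rw [hp]
      simp [if_neg hj, hcc, if_pos hp, hp0]
    · simp [if_neg hj, hcc, if_neg hp]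
  -- the inverse identity
  have hdet : IsUnit (compMat Q A).det := by
    rw [← hginf]
    exact (Matrix.isUnit_iff_isUnit_det _).1 (Units.isUnit ginf)
  have hG : compMat Q B * (compMat Q A)⁻¹ = G' := by
    rw [← hG'A, Matrix.mul_assoc, Matrix.mul_nonsing_inv _ hdet, Matrix.mul_one]
  -- the group element h₁ = g0inv * ginf⁻¹
  have hmem : g0inv * ginf⁻¹ ∈ Subgroup.closure ({ginf, g0inv} : Set (GL (Fin Q) ℤ)) := by
    exact Subgroup.mul_mem _
      (Subgroup.subset_closure (by simp))
      (Subgroup.inv_mem _ (Subgroup.subset_closure (by simp)))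
  have hcoe : ((g0inv * ginf⁻¹ : GL (Fin Q) ℤ) : Matrix (Fin Q) (Fin Q) ℤ) = G' := by
    rw [Units.val_mul, Matrix.coe_units_inv, hginf, hg0inv, hG]
  have hinv := hXm (g0inv * ginf⁻¹) hmem
  rw [hcoe] at hinv
  -- complexified coefficients
  set cC : Fin Q → ℂ := fun p => ((cc p : ℤ) : ℂ) with hcC
  have hmap : G'.map (Int.cast : ℤ → ℂ)
      = Matrix.of fun p l => if l = z then cC p else if p = l then (1 : ℂ) else 0 := by
    ext p l
    simp only [Matrix.map_apply, hG', Matrix.of_apply]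
    by_cases h1 : l = z <;> by_cases h2 : p = l <;> simp [h1, h2, hcC]
  rw [hmap] at hinv
  have key : ∀ p q2 : Fin Q,
      cC q2 * (cC p * Xm z z + (if p = z then 0 else Xm p z))
        + (if q2 = z then 0 else (cC p * Xm z q2 + (if p = z then 0 else Xm p q2)))
      = Xm p q2 := by
    intro p q2
    have h1 := congrFun (congrFun hinv p) q2
    rw [mul_colop z cC _ p q2, rowop_mul z cC Xm p z, rowop_mul z cC Xm p q2] at h1
    exact h1
  have hcz : cC z = 1 := by simp [hcC, hcc]
  have hzz : ∀ q2 : Fin Q, q2 ≠ z → cC q2 * Xm z z = 0 := by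
    intro q2 hq2
    have h := key z q2
    simp only [if_pos rfl, if_neg hq2, hcz, one_mul, add_zero, if_true, ite_true,
      eq_self_iff_true] at h
    linear_combination h
  have main : ∀ p q2 : Fin Q, p ≠ z → q2 ≠ z →
      cC p * Xm z q2 + cC q2 * Xm p z = 0 := by
    intro p q2 hp hq2
    have h := key p q2
    simp only [if_neg hp, if_neg hq2] at h
    have h0 := hzz q2 hq2
    linear_combination h - cC p * h0
  have hne : ∀ i : Fin Q, 1 ≤ (i : ℕ) → i ≠ z := by
    intro i hi h
    rw [h] at hi
    simp [hz] at hi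
  have part1 : ∀ i j : Fin Q, 1 ≤ (i : ℕ) → 1 ≤ (j : ℕ) →
      (((compMat Q B * (compMat Q A)⁻¹) i z : ℤ) : ℂ) * Xm z j
        + (((compMat Q B * (compMat Q A)⁻¹) j z : ℤ) : ℂ) * Xm i z = 0 := by
    intro i j hi hj
    have hgi : ((compMat Q B * (compMat Q A)⁻¹) i z : ℤ) = cc i := by
      rw [hG]; simp [hG']
    have hgj : ((compMat Q B * (compMat Q A)⁻¹) j z : ℤ) = cc j := by
      rw [hG]; simp [hG']
    rw [hgi, hgj]
    exact main i j (hne i hi) (hne j hj)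
  refine ⟨part1, ?_⟩
  intro j hj hjne i hi
  have h1 := part1 i j hi hj
  set a : ℂ := (((compMat Q B * (compMat Q A)⁻¹) i z : ℤ) : ℂ)
  set b : ℂ := (((compMat Q B * (compMat Q A)⁻¹) j z : ℤ) : ℂ)
  have hb : b ≠ 0 := hjne
  field_simp
  linear_combination h1
end

section
/- For every vector v = (v₁,…,v_Q)ᵀ ∈ ℂ^Q, the determinant of the Q×Q matrix T = (v, E₀·v, E₀²·v, …, E₀^{Q−1}·v) whose columns are the iterates of v under E₀ equals ε·∏_{1 ≤ α < β ≤ p} (e_α − e_β)^{μ_α·μ_β} · ∏_{α=1}^p (v_{σ_{α−1}+1})^{μ_α}, where ε ∈ {+1, −1} is a sign depending only on (μ₁,…,μ_p) and not on v or on e₁,…,e_p. -/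
open Matrix

/-- Partial sums `σ_a = μ_0 + ⋯ + μ_{a-1}` of the block sizes. -/
def sigmaSum (μ : ℕ → ℕ) (a : ℕ) : ℕ := ∑ b ∈ Finset.range a, μ b

/-- The index of the block containing position `i`: the largest `a ≤ p` with `σ_a ≤ i`. -/
def blkOf (p : ℕ) (μ : ℕ → ℕ) (i : ℕ) : ℕ :=
  Nat.findGreatest (fun a => sigmaSum μ a ≤ i) p

/-- The block-diagonal matrix `E₀` whose `α`-th diagonal block is the
`μ_α × μ_α` Jordan-type block `e_α·id + J_{μ_α,-}` (ones on the subdiagonal). -/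
def E0mat (Q p : ℕ) (μ : ℕ → ℕ) (e : ℕ → ℂ) : Matrix (Fin Q) (Fin Q) ℂ :=
  Matrix.of fun i j =>
    if i = j then e (blkOf p μ (i : ℕ))
    else if (i : ℕ) = (j : ℕ) + 1 ∧ blkOf p μ (i : ℕ) = blkOf p μ (j : ℕ) then 1
    else 0

namespace DetIter
open Polynomial Finset

variable (p : ℕ) (μ : ℕ → ℕ)

lemma sigma_mono : Monotone (sigmaSum μ) := fun _ _ h =>
  Finset.sum_le_sum_of_subset (Finset.range_subset_range.2 h)

lemma blk_le (i : ℕ) : blkOf p μ i ≤ p := Nat.findGreatest_le p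

lemma sigma_blk_le (i : ℕ) : sigmaSum μ (blkOf p μ i) ≤ i :=
  Nat.findGreatest_spec (P := fun a => sigmaSum μ a ≤ i) (Nat.zero_le p) (by simp [sigmaSum])

lemma blk_eq_of_le {i l : ℕ} (h1 : sigmaSum μ (blkOf p μ i) ≤ l) (h2 : l ≤ i) :
    blkOf p μ l = blkOf p μ i := by
  have hge : blkOf p μ i ≤ blkOf p μ l := Nat.le_findGreatest (blk_le p μ i) h1
  rcases eq_or_lt_of_le hge with h | h
  · exact h.symm
  · exact absurd (le_trans (sigma_blk_le p μ l) h2)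
      (Nat.findGreatest_is_greatest (P := fun a => sigmaSum μ a ≤ i) h (blk_le p μ l))

lemma blk_eq_self {a l : ℕ} (ha : a ≤ p) (h1 : sigmaSum μ a ≤ l) (h2 : l < sigmaSum μ (a + 1)) :
    blkOf p μ l = a := by
  have hge : a ≤ blkOf p μ l := Nat.le_findGreatest ha h1
  rcases eq_or_lt_of_le hge with h | h
  · exact h.symm
  · have := le_trans (sigma_mono μ (show a + 1 ≤ blkOf p μ l by omega)) (sigma_blk_le p μ l)
    omega

lemma blk_lt {i : ℕ} (h : i < sigmaSum μ p) : blkOf p μ i < p :=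
  lt_of_le_of_ne (blk_le p μ i) fun he => absurd (he ▸ sigma_blk_le p μ i) (not_le.2 h)

lemma prod_blk (F : ℕ → ℂ) :
    ∀ a ≤ p, ∏ l ∈ Finset.range (sigmaSum μ a), F (blkOf p μ l)
      = ∏ b ∈ Finset.range a, F b ^ μ b := by
  intro a
  induction a with
  | zero => simp [sigmaSum]
  | succ a ih =>
    intro ha
    have h1 : sigmaSum μ (a + 1) = sigmaSum μ a + μ a := Finset.sum_range_succ _ _
    rw [h1, Finset.prod_range_add, ih (by omega), Finset.prod_range_succ]
    congr 1
    have : ∀ x ∈ Finset.range (μ a), F (blkOf p μ (sigmaSum μ a + x)) = F a := by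
      intro x hx
      simp only [Finset.mem_range] at hx
      rw [blk_eq_self p μ (a := a) (l := sigmaSum μ a + x) (by omega) (by omega) (by omega)]
    rw [Finset.prod_congr rfl this, Finset.prod_const, Finset.card_range]

lemma pos_K_iff (l : ℕ) :
    0 < l - sigmaSum μ (blkOf p μ l) ↔ 0 < l ∧ blkOf p μ (l - 1) = blkOf p μ l := by
  have hσ := sigma_blk_le p μ l
  constructor
  · intro h
    exact ⟨by omega, blk_eq_of_le p μ (by omega) (by omega)⟩
  · rintro ⟨h1, h2⟩
    have hσ' := sigma_blk_le p μ (l - 1)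
    rw [h2] at hσ'
    omega

lemma taylor_pow_mul_coeff (a : ℂ) (g : ℂ[X]) (m k : ℕ) :
    ((taylor a) (g * (X - C a) ^ m)).coeff k
      = if m ≤ k then ((taylor a) g).coeff (k - m) else 0 := by
  have hX : taylor a (X - C a) = X := by
    rw [map_sub, taylor_X, taylor_C]; ring
  have : (taylor a) (g * (X - C a) ^ m) = taylorAlgHom a (g * (X - C a) ^ m) := rfl
  rw [this, _root_.map_mul, map_pow]
  have hg : taylorAlgHom a g = taylor a g := rfl
  have hX' : taylorAlgHom a (X - C a) = X := hX
  rw [hg, hX', Polynomial.coeff_mul_X_pow']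

noncomputable def Vc (p : ℕ) (μ : ℕ → ℕ) (e : ℕ → ℂ) (n : ℕ) (l : ℕ) : ℂ :=
  ((taylor (e (blkOf p μ l))) ((X : ℂ[X]) ^ n)).coeff (l - sigmaSum μ (blkOf p μ l))

def Lmat (Q p : ℕ) (μ : ℕ → ℕ) (v : ℕ → ℂ) : Matrix (Fin Q) (Fin Q) ℂ :=
  Matrix.of fun i l =>
    if blkOf p μ (l : ℕ) = blkOf p μ (i : ℕ) ∧ (l : ℕ) ≤ (i : ℕ)
    then v ((i : ℕ) - (l : ℕ) + sigmaSum μ (blkOf p μ (i : ℕ))) else 0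

variable (Q : ℕ) (e : ℕ → ℂ) (v : ℕ → ℂ)

lemma E0_entry_mul (i m : Fin Q) (w : Fin Q → ℂ) :
    E0mat Q p μ e i m * w m
      = (if m = i then e (blkOf p μ (i : ℕ)) * w m else 0)
        + (if (i : ℕ) = (m : ℕ) + 1 ∧ blkOf p μ (i : ℕ) = blkOf p μ (m : ℕ)
           then w m else 0) := by
  rcases eq_or_ne i m with h | h
  · subst h
    simp [E0mat]

  · have h' : m ≠ i := h.symm
    simp only [E0mat, Matrix.of_apply, if_neg h, if_neg h']
    split <;> ring

lemma E0_mulVec (w : Fin Q → ℂ) (i : Fin Q) :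
    (E0mat Q p μ e *ᵥ w) i
      = e (blkOf p μ (i : ℕ)) * w i
        + (if h : 0 < (i : ℕ) ∧ blkOf p μ ((i : ℕ) - 1) = blkOf p μ (i : ℕ)
           then w ⟨(i : ℕ) - 1, by omega⟩ else 0) := by
  have : (E0mat Q p μ e *ᵥ w) i = ∑ m : Fin Q, E0mat Q p μ e i m * w m := rfl
  rw [this]
  have hsplit := Finset.sum_congr rfl (fun m (_ : m ∈ Finset.univ) => E0_entry_mul p μ Q e i m w)
  rw [hsplit, Finset.sum_add_distrib, Finset.sum_ite_eq' Finset.univ i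
    (fun m => e (blkOf p μ (i : ℕ)) * w m), if_pos (Finset.mem_univ i)]
  congr 1
  split
  · rename_i hc
    rw [Finset.sum_eq_single (⟨(i : ℕ) - 1, by omega⟩ : Fin Q)]
    · rw [if_pos]
      constructor
      · simp; omega
      · simpa using hc.2.symm
    · intro m _ hm
      rw [if_neg]
      rintro ⟨h1, _⟩
      exact hm (Fin.ext (by simp; omega))
    · simp
  · rename_i hc
    apply Finset.sum_eq_zero
    intro m _
    rw [if_neg]
    rintro ⟨h1, h2⟩
    exact hc ⟨by omega, by rw [show (i : ℕ) - 1 = (m : ℕ) by omega]; exact h2.symm⟩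

lemma E0_entry_mul' (l m : Fin Q) (w : Fin Q → ℂ) :
    w m * E0mat Q p μ e m l
      = (if m = l then e (blkOf p μ (l : ℕ)) * w m else 0)
        + (if (m : ℕ) = (l : ℕ) + 1 ∧ blkOf p μ (m : ℕ) = blkOf p μ (l : ℕ)
           then w m else 0) := by
  rcases eq_or_ne m l with h | h
  · subst h
    simp [E0mat, mul_comm]

  · simp only [E0mat, Matrix.of_apply, if_neg h]
    split <;> ring

lemma E0_vecMul (w : Fin Q → ℂ) (l : Fin Q) :
    (w ᵥ* E0mat Q p μ e) l
      = e (blkOf p μ (l : ℕ)) * w l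
        + (if h : (l : ℕ) + 1 < Q ∧ blkOf p μ ((l : ℕ) + 1) = blkOf p μ (l : ℕ)
           then w ⟨(l : ℕ) + 1, h.1⟩ else 0) := by
  have : (w ᵥ* E0mat Q p μ e) l = ∑ m : Fin Q, w m * E0mat Q p μ e m l := rfl
  rw [this]
  have hsplit := Finset.sum_congr rfl (fun m (_ : m ∈ Finset.univ) => E0_entry_mul' p μ Q e l m w)
  rw [hsplit, Finset.sum_add_distrib, Finset.sum_ite_eq' Finset.univ l
    (fun m => e (blkOf p μ (l : ℕ)) * w m), if_pos (Finset.mem_univ l)]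
  congr 1
  split
  · rename_i hc
    rw [Finset.sum_eq_single (⟨(l : ℕ) + 1, hc.1⟩ : Fin Q)]
    · rw [if_pos ⟨rfl, hc.2⟩]
    · intro m _ hm
      rw [if_neg]
      rintro ⟨h1, _⟩
      exact hm (Fin.ext (by simp; omega))
    · simp
  · rename_i hc
    apply Finset.sum_eq_zero
    intro m _
    rw [if_neg]
    rintro ⟨h1, h2⟩
    exact hc ⟨by omega, by rw [← h1]; exact h2⟩
lemma E0_comm_L : E0mat Q p μ e * Lmat Q p μ v = Lmat Q p μ v * E0mat Q p μ e := by
  ext i l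
  have hiQ := i.isLt
  have hlQ := l.isLt
  have hL : (E0mat Q p μ e * Lmat Q p μ v) i l
      = (E0mat Q p μ e *ᵥ fun m => Lmat Q p μ v m l) i := rfl
  have hR : (Lmat Q p μ v * E0mat Q p μ e) i l
      = ((fun m => Lmat Q p μ v i m) ᵥ* E0mat Q p μ e) l := rfl
  rw [hL, hR, E0_mulVec, E0_vecMul]
  have hσi := sigma_blk_le p μ (i : ℕ)
  have hσl := sigma_blk_le p μ (l : ℕ)
  by_cases hbl : blkOf p μ (l : ℕ) = blkOf p μ (i : ℕ)
  · have hσe : sigmaSum μ (blkOf p μ (l : ℕ)) = sigmaSum μ (blkOf p μ (i : ℕ)) := by rw [hbl]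
    by_cases hli : (l : ℕ) < (i : ℕ)
    · have hb1 : blkOf p μ ((i : ℕ) - 1) = blkOf p μ (i : ℕ) :=
        blk_eq_of_le p μ (by omega) (by omega)
      have hb2 : blkOf p μ ((l : ℕ) + 1) = blkOf p μ (i : ℕ) :=
        blk_eq_of_le p μ (by omega) (by omega)
      rw [dif_pos ⟨by omega, hb1⟩,
        dif_pos (show (l : ℕ) + 1 < Q ∧ blkOf p μ ((l : ℕ) + 1) = blkOf p μ (l : ℕ) from
          ⟨by omega, hb2.trans hbl.symm⟩)]
      show e (blkOf p μ (i : ℕ)) * Lmat Q p μ v i l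
            + (if blkOf p μ (l : ℕ) = blkOf p μ ((i : ℕ) - 1) ∧ (l : ℕ) ≤ (i : ℕ) - 1
               then v ((i : ℕ) - 1 - (l : ℕ) + sigmaSum μ (blkOf p μ ((i : ℕ) - 1))) else 0)
          = e (blkOf p μ (l : ℕ)) * Lmat Q p μ v i l
            + (if blkOf p μ ((l : ℕ) + 1) = blkOf p μ (i : ℕ) ∧ (l : ℕ) + 1 ≤ (i : ℕ)
               then v ((i : ℕ) - ((l : ℕ) + 1) + sigmaSum μ (blkOf p μ (i : ℕ))) else 0)
      rw [if_pos ⟨hbl.trans hb1.symm, by omega⟩, if_pos ⟨hb2, by omega⟩, hbl, hb1,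
        show (i : ℕ) - 1 - (l : ℕ) = (i : ℕ) - ((l : ℕ) + 1) by omega]
    · -- same block, l ≥ i
      rw [hbl]
      congr 1
      trans (0 : ℂ)
      · split
        · show (if blkOf p μ (l : ℕ) = blkOf p μ ((i : ℕ) - 1) ∧ (l : ℕ) ≤ (i : ℕ) - 1
              then v ((i : ℕ) - 1 - (l : ℕ) + sigmaSum μ (blkOf p μ ((i : ℕ) - 1))) else 0) = 0
          rw [if_neg]
          rintro ⟨_, h2⟩
          rename_i hc
          omega
        · rfl
      · symm
        split
        · show (if blkOf p μ ((l : ℕ) + 1) = blkOf p μ (i : ℕ) ∧ (l : ℕ) + 1 ≤ (i : ℕ)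
              then v ((i : ℕ) - ((l : ℕ) + 1) + sigmaSum μ (blkOf p μ (i : ℕ))) else 0) = 0
          rw [if_neg]
          rintro ⟨_, h2⟩
          omega
        · rfl
  · -- different blocks
    have hL0 : Lmat Q p μ v i l = 0 := by
      show (if blkOf p μ (l : ℕ) = blkOf p μ (i : ℕ) ∧ (l : ℕ) ≤ (i : ℕ)
          then v ((i : ℕ) - (l : ℕ) + sigmaSum μ (blkOf p μ (i : ℕ))) else 0) = 0
      rw [if_neg]
      rintro ⟨h1, _⟩
      exact hbl h1
    rw [hL0, mul_zero, mul_zero]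
    trans (0 : ℂ)
    · rw [zero_add]
      split
      · rename_i hc
        show (if blkOf p μ (l : ℕ) = blkOf p μ ((i : ℕ) - 1) ∧ (l : ℕ) ≤ (i : ℕ) - 1
            then v ((i : ℕ) - 1 - (l : ℕ) + sigmaSum μ (blkOf p μ ((i : ℕ) - 1))) else 0) = 0
        rw [if_neg]
        rintro ⟨h1, _⟩
        exact hbl (h1.trans hc.2)
      · rfl
    · symm
      rw [zero_add]
      split
      · rename_i hc
        show (if blkOf p μ ((l : ℕ) + 1) = blkOf p μ (i : ℕ) ∧ (l : ℕ) + 1 ≤ (i : ℕ)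
            then v ((i : ℕ) - ((l : ℕ) + 1) + sigmaSum μ (blkOf p μ (i : ℕ))) else 0) = 0
        rw [if_neg]
        rintro ⟨h1, _⟩
        exact hbl (hc.2.symm.trans h1)
      · rfl
lemma Vc_zero (l : ℕ) :
    Vc p μ e 0 l = if l - sigmaSum μ (blkOf p μ l) = 0 then 1 else 0 := by
  unfold Vc
  rw [pow_zero, taylor_one, coeff_C]

lemma Vc_succ (n l : ℕ) :
    Vc p μ e (n + 1) l
      = e (blkOf p μ l) * Vc p μ e n l
        + (if 0 < l ∧ blkOf p μ (l - 1) = blkOf p μ l then Vc p μ e n (l - 1) else 0) := by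
  set c := e (blkOf p μ l) with hc
  set K := l - sigmaSum μ (blkOf p μ l) with hK
  have h1 : Vc p μ e (n + 1) l
      = ((taylor c) ((X : ℂ[X]) ^ n) * (X + C c)).coeff K := by
    unfold Vc
    rw [pow_succ, taylor_mul, taylor_X]
  have h2 := Polynomial.coeff_mul_X_pow' ((taylor c) ((X : ℂ[X]) ^ n)) 1 K
  rw [pow_one] at h2
  rw [h1, mul_add, coeff_add, coeff_mul_C, h2, mul_comm _ c, add_comm]
  congr 1
  by_cases hpos : 0 < K
  · rw [if_pos (by omega : 1 ≤ K), if_pos ((pos_K_iff p μ l).1 hpos)]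
    have hb := ((pos_K_iff p μ l).1 hpos).2
    unfold Vc
    rw [hb]
    congr 1
    have := sigma_blk_le p μ l
    omega
  · rw [if_neg (by omega : ¬ 1 ≤ K), if_neg]
    rw [← pos_K_iff p μ l]
    omega

lemma krylov (n : ℕ) :
    ((E0mat Q p μ e ^ n) *ᵥ fun k : Fin Q => v (k : ℕ))
      = fun i : Fin Q => ∑ l : Fin Q, Lmat Q p μ v i l * Vc p μ e n (l : ℕ) := by
  induction n with
  | zero =>
    rw [pow_zero, one_mulVec]
    funext i
    have hiQ := i.isLt
    have hσi := sigma_blk_le p μ (i : ℕ)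
    have hblk : blkOf p μ (sigmaSum μ (blkOf p μ (i : ℕ))) = blkOf p μ (i : ℕ) :=
      blk_eq_of_le p μ le_rfl hσi
    symm
    rw [Finset.sum_eq_single (⟨sigmaSum μ (blkOf p μ (i : ℕ)), by omega⟩ : Fin Q)]
    · have h0 : sigmaSum μ (blkOf p μ (sigmaSum μ (blkOf p μ (i : ℕ))))
          = sigmaSum μ (blkOf p μ (i : ℕ)) := by rw [hblk]
      have hv1 : Vc p μ e 0 (sigmaSum μ (blkOf p μ (i : ℕ))) = 1 := by
        rw [Vc_zero, if_pos (by omega)]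
      show Lmat Q p μ v i ⟨sigmaSum μ (blkOf p μ (i : ℕ)), by omega⟩
          * Vc p μ e 0 (sigmaSum μ (blkOf p μ (i : ℕ))) = v (i : ℕ)
      rw [hv1, mul_one]
      show (if blkOf p μ (sigmaSum μ (blkOf p μ (i : ℕ))) = blkOf p μ (i : ℕ)
            ∧ sigmaSum μ (blkOf p μ (i : ℕ)) ≤ (i : ℕ)
          then v ((i : ℕ) - sigmaSum μ (blkOf p μ (i : ℕ)) + sigmaSum μ (blkOf p μ (i : ℕ)))
          else 0) = v (i : ℕ)
      rw [if_pos ⟨hblk, hσi⟩, show (i : ℕ) - sigmaSum μ (blkOf p μ (i : ℕ))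
          + sigmaSum μ (blkOf p μ (i : ℕ)) = (i : ℕ) by omega]
    · intro l _ hl
      rw [Vc_zero]
      have hσl := sigma_blk_le p μ (l : ℕ)
      by_cases hc : blkOf p μ (l : ℕ) = blkOf p μ (i : ℕ) ∧ (l : ℕ) ≤ (i : ℕ)
      · rw [if_neg, mul_zero]
        intro h0
        apply hl
        apply Fin.ext
        show (l : ℕ) = sigmaSum μ (blkOf p μ (i : ℕ))
        rw [← hc.1]
        omega
      · show (if blkOf p μ (l : ℕ) = blkOf p μ (i : ℕ) ∧ (l : ℕ) ≤ (i : ℕ)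
            then v ((i : ℕ) - (l : ℕ) + sigmaSum μ (blkOf p μ (i : ℕ))) else 0) * _ = 0
        rw [if_neg hc, zero_mul]
    · intro h
      exact absurd (Finset.mem_univ _) h
  | succ n ih =>
    rw [pow_succ', ← mulVec_mulVec, ih]
    have hmid : (fun i : Fin Q => ∑ l : Fin Q, Lmat Q p μ v i l * Vc p μ e n (l : ℕ))
        = Lmat Q p μ v *ᵥ (fun l : Fin Q => Vc p μ e n (l : ℕ)) := rfl
    rw [hmid, mulVec_mulVec, E0_comm_L p μ Q e v, ← mulVec_mulVec]
    have hstep : (E0mat Q p μ e *ᵥ fun l : Fin Q => Vc p μ e n (l : ℕ))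
        = fun l : Fin Q => Vc p μ e (n + 1) (l : ℕ) := by
      funext l
      rw [E0_mulVec, Vc_succ]
      congr 1
    rw [hstep]
    rfl
noncomputable def Bpoly (e : ℕ → ℂ) (j : ℕ) : ℂ[X] :=
  ∏ l ∈ Finset.range j, (X - C (e (blkOf p μ l)))

lemma Bpoly_monic (j : ℕ) : (Bpoly p μ e j).Monic :=
  monic_prod_of_monic _ _ fun _ _ => monic_X_sub_C _

lemma Bpoly_natDegree (j : ℕ) : (Bpoly p μ e j).natDegree = j := by
  rw [Bpoly, natDegree_prod_of_monic _ _ fun _ _ => monic_X_sub_C _]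
  simp [natDegree_X_sub_C]

noncomputable def Vmat : Matrix (Fin Q) (Fin Q) ℂ :=
  Matrix.of fun i j => Vc p μ e (j : ℕ) (i : ℕ)

noncomputable def Umat : Matrix (Fin Q) (Fin Q) ℂ :=
  Matrix.of fun m j => (Bpoly p μ e (j : ℕ)).coeff (m : ℕ)

noncomputable def Mmat : Matrix (Fin Q) (Fin Q) ℂ :=
  Matrix.of fun i j =>
    ((taylor (e (blkOf p μ (i : ℕ)))) (Bpoly p μ e (j : ℕ))).coeff
      ((i : ℕ) - sigmaSum μ (blkOf p μ (i : ℕ)))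

lemma VU_eq_M : Vmat p μ Q e * Umat p μ Q e = Mmat p μ Q e := by
  ext i j
  set c := e (blkOf p μ (i : ℕ))
  set K := (i : ℕ) - sigmaSum μ (blkOf p μ (i : ℕ))
  have hBj : Bpoly p μ e (j : ℕ)
      = ∑ m ∈ Finset.range Q, Polynomial.monomial m ((Bpoly p μ e (j : ℕ)).coeff m) :=
    Polynomial.as_sum_range' _ Q (by rw [Bpoly_natDegree]; exact j.isLt)
  have hM : Mmat p μ Q e i j
      = ∑ m ∈ Finset.range Q, (Bpoly p μ e (j : ℕ)).coeff m * ((taylor c) ((X : ℂ[X]) ^ m)).coeff K := by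
    show ((taylor c) (Bpoly p μ e (j : ℕ))).coeff K = _
    conv_lhs => rw [hBj]
    rw [map_sum, Polynomial.finset_sum_coeff]
    refine Finset.sum_congr rfl fun m _ => ?_
    rw [← Polynomial.C_mul_X_pow_eq_monomial]
    have : (taylor c) (C ((Bpoly p μ e (j : ℕ)).coeff m) * (X : ℂ[X]) ^ m)
        = C ((Bpoly p μ e (j : ℕ)).coeff m) * (taylor c) ((X : ℂ[X]) ^ m) := by
      have h2 : ∀ f g : ℂ[X], (taylor c) (f * g) = (taylor c) f * (taylor c) g :=
        fun f g => taylor_mul c f g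
      rw [h2, taylor_C]
    rw [this, coeff_C_mul]
  rw [hM]
  show ∑ m : Fin Q, Vmat p μ Q e i m * Umat p μ Q e m j = _
  have h3 : ∑ m ∈ Finset.range Q, (Bpoly p μ e (j : ℕ)).coeff m * ((taylor c) ((X : ℂ[X]) ^ m)).coeff K
      = ∑ m ∈ Finset.range Q, ((taylor c) ((X : ℂ[X]) ^ m)).coeff K * (Bpoly p μ e (j : ℕ)).coeff m :=
    Finset.sum_congr rfl fun m _ => mul_comm _ _
  rw [h3]
  exact Fin.sum_univ_eq_sum_range
    (fun m' : ℕ => ((taylor c) ((X : ℂ[X]) ^ m')).coeff K * (Bpoly p μ e (j : ℕ)).coeff m') Q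

lemma det_Umat : (Umat p μ Q e).det = 1 := by
  rw [Matrix.det_of_upperTriangular]
  · rw [Finset.prod_congr rfl fun j _ => ?_, Finset.prod_const_one]
    show (Bpoly p μ e (j : ℕ)).coeff (j : ℕ) = 1
    have := (Bpoly_monic p μ e (j : ℕ)).coeff_natDegree
    rwa [Bpoly_natDegree] at this
  · intro i j hij
    show (Bpoly p μ e (j : ℕ)).coeff (i : ℕ) = 0
    apply Polynomial.coeff_eq_zero_of_natDegree_lt
    rw [Bpoly_natDegree]
    exact hij

lemma Mmat_lowerTriangular : (Mmat p μ Q e).BlockTriangular OrderDual.toDual := by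
  intro i j hij
  have hij' : (i : ℕ) < (j : ℕ) := hij
  have hσi := sigma_blk_le p μ (i : ℕ)
  have hsub : Finset.Icc (sigmaSum μ (blkOf p μ (i : ℕ))) (i : ℕ) ⊆ Finset.range (j : ℕ) := by
    intro x hx
    simp only [Finset.mem_Icc] at hx
    simp only [Finset.mem_range]
    omega
  have hIcc : ∏ l ∈ Finset.Icc (sigmaSum μ (blkOf p μ (i : ℕ))) (i : ℕ),
        ((X : ℂ[X]) - C (e (blkOf p μ l)))
      = ((X : ℂ[X]) - C (e (blkOf p μ (i : ℕ)))) ^ ((i : ℕ) - sigmaSum μ (blkOf p μ (i : ℕ)) + 1) := by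
    rw [Finset.prod_congr rfl (fun l hl => ?_), Finset.prod_const, Nat.card_Icc]
    · congr 1
      omega
    · simp only [Finset.mem_Icc] at hl
      rw [blk_eq_of_le p μ hl.1 hl.2]
  have hB : Bpoly p μ e (j : ℕ)
      = (∏ l ∈ Finset.range (j : ℕ) \ Finset.Icc (sigmaSum μ (blkOf p μ (i : ℕ))) (i : ℕ),
          ((X : ℂ[X]) - C (e (blkOf p μ l))))
        * ((X : ℂ[X]) - C (e (blkOf p μ (i : ℕ)))) ^ ((i : ℕ) - sigmaSum μ (blkOf p μ (i : ℕ)) + 1) := by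
    rw [← hIcc, Bpoly, Finset.prod_sdiff hsub]
  show ((taylor (e (blkOf p μ (i : ℕ)))) (Bpoly p μ e (j : ℕ))).coeff _ = 0
  rw [hB, taylor_pow_mul_coeff, if_neg (by omega)]

lemma Mmat_diag (i : Fin Q) :
    Mmat p μ Q e i i
      = ∏ b ∈ Finset.range (blkOf p μ (i : ℕ)), (e (blkOf p μ (i : ℕ)) - e b) ^ μ b := by
  have hσi := sigma_blk_le p μ (i : ℕ)
  have hsplit : Bpoly p μ e (i : ℕ)
      = (∏ l ∈ Finset.range (sigmaSum μ (blkOf p μ (i : ℕ))), ((X : ℂ[X]) - C (e (blkOf p μ l))))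
        * ((X : ℂ[X]) - C (e (blkOf p μ (i : ℕ)))) ^ ((i : ℕ) - sigmaSum μ (blkOf p μ (i : ℕ))) := by
    have h1 : (i : ℕ) = sigmaSum μ (blkOf p μ (i : ℕ))
        + ((i : ℕ) - sigmaSum μ (blkOf p μ (i : ℕ))) := by omega
    rw [Bpoly]
    conv_lhs => rw [h1]
    rw [Finset.prod_range_add]
    congr 1
    have hx' : ∀ x ∈ Finset.range ((i : ℕ) - sigmaSum μ (blkOf p μ (i : ℕ))),
        ((X : ℂ[X]) - C (e (blkOf p μ (sigmaSum μ (blkOf p μ (i : ℕ)) + x))))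
          = ((X : ℂ[X]) - C (e (blkOf p μ (i : ℕ)))) := by
      intro x hx
      simp only [Finset.mem_range] at hx
      rw [blk_eq_of_le p μ (i := (i : ℕ))
        (l := sigmaSum μ (blkOf p μ (i : ℕ)) + x) (by omega) (by omega)]
    rw [Finset.prod_congr rfl hx', Finset.prod_const, Finset.card_range]
  show ((taylor (e (blkOf p μ (i : ℕ)))) (Bpoly p μ e (i : ℕ))).coeff _ = _
  rw [hsplit, taylor_pow_mul_coeff, if_pos le_rfl, Nat.sub_self, taylor_coeff_zero,
    eval_prod]
  simp only [eval_sub, eval_X, eval_C]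
  exact prod_blk p μ (fun b => e (blkOf p μ (i : ℕ)) - e b) (blkOf p μ (i : ℕ))
    (blk_le p μ (i : ℕ))
lemma det_Lmat (hQσ : sigmaSum μ p = Q) :
    (Lmat Q p μ v).det = ∏ α ∈ Finset.range p, v (sigmaSum μ α) ^ μ α := by
  rw [Matrix.det_of_lowerTriangular (Lmat Q p μ v) ?_]
  · have hdiag : ∀ i : Fin Q, Lmat Q p μ v i i = v (sigmaSum μ (blkOf p μ (i : ℕ))) := by
      intro i
      show (if blkOf p μ (i : ℕ) = blkOf p μ (i : ℕ) ∧ (i : ℕ) ≤ (i : ℕ)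
          then v ((i : ℕ) - (i : ℕ) + sigmaSum μ (blkOf p μ (i : ℕ))) else 0) = _
      rw [if_pos ⟨rfl, le_rfl⟩]
      congr 1
      omega
    rw [Finset.prod_congr rfl fun i _ => hdiag i,
      Fin.prod_univ_eq_prod_range (fun l => v (sigmaSum μ (blkOf p μ l))) Q, ← hQσ]
    exact prod_blk p μ (fun b => v (sigmaSum μ b)) p le_rfl
  · intro i j hij
    have hij' : (i : ℕ) < (j : ℕ) := hij
    show (if blkOf p μ (j : ℕ) = blkOf p μ (i : ℕ) ∧ (j : ℕ) ≤ (i : ℕ)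
        then v ((i : ℕ) - (j : ℕ) + sigmaSum μ (blkOf p μ (i : ℕ))) else 0) = 0
    rw [if_neg]
    rintro ⟨_, h2⟩
    omega

lemma det_Mmat (hQσ : sigmaSum μ p = Q) :
    (Mmat p μ Q e).det
      = ∏ α ∈ Finset.range p, (∏ b ∈ Finset.range α, (e α - e b) ^ μ b) ^ μ α := by
  rw [Matrix.det_of_lowerTriangular _ (Mmat_lowerTriangular p μ Q e),
    Finset.prod_congr rfl fun i _ => Mmat_diag p μ Q e i,
    Fin.prod_univ_eq_prod_range
      (fun l => ∏ b ∈ Finset.range (blkOf p μ l), (e (blkOf p μ l) - e b) ^ μ b) Q, ← hQσ]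
  exact prod_blk p μ (fun α => ∏ b ∈ Finset.range α, (e α - e b) ^ μ b) p le_rfl

lemma sign_prod :
    ∏ α ∈ Finset.range p, (∏ b ∈ Finset.range α, (e α - e b) ^ μ b) ^ μ α
      = (-1 : ℂ) ^ (∑ β ∈ Finset.range p, ∑ α ∈ Finset.range β, μ α * μ β)
        * ∏ β ∈ Finset.range p, ∏ α ∈ Finset.range β, (e α - e β) ^ (μ α * μ β) := by
  have hstep : ∀ β ∈ Finset.range p,
      (∏ b ∈ Finset.range β, (e β - e b) ^ μ b) ^ μ β
        = (-1 : ℂ) ^ (∑ α ∈ Finset.range β, μ α * μ β)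
          * ∏ α ∈ Finset.range β, (e α - e β) ^ (μ α * μ β) := by
    intro β _
    have hfact : ∀ b ∈ Finset.range β,
        ((e β - e b) ^ μ b) ^ μ β
          = (-1 : ℂ) ^ (μ b * μ β) * (e b - e β) ^ (μ b * μ β) := by
      intro b _
      rw [← pow_mul, show e β - e b = -(e b - e β) by ring, neg_pow]
    rw [← Finset.prod_pow, Finset.prod_congr rfl hfact, Finset.prod_mul_distrib,
      Finset.prod_pow_eq_pow_sum]
  rw [Finset.prod_congr rfl hstep, Finset.prod_mul_distrib, Finset.prod_pow_eq_pow_sum]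

end DetIter

/-- The determinant of the matrix with columns `v, E₀v, …, E₀^{Q-1}v` equals
`ε·∏_{α<β} (e_α - e_β)^{μ_α μ_β}·∏_α v_{σ_{α-1}+1}^{μ_α}` for a sign `ε` depending
only on `(μ_1, …, μ_p)`. -/
theorem det_iterates_formula
    (p Q : ℕ) (hp : 1 ≤ p) (μ : ℕ → ℕ) (hμ : ∀ α < p, 0 < μ α)
    (hQ : Q = ∑ α ∈ Finset.range p, μ α) :
    ∃ ε : ℂ, (ε = 1 ∨ ε = -1) ∧
      ∀ (e : ℕ → ℂ) (v : ℕ → ℂ),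
        (Matrix.of fun i j : Fin Q =>
            ((E0mat Q p μ e ^ (j : ℕ)) *ᵥ fun k : Fin Q => v (k : ℕ)) i).det
          = ε * (∏ β ∈ Finset.range p, ∏ α ∈ Finset.range β,
                  (e α - e β) ^ (μ α * μ β))
              * ∏ α ∈ Finset.range p, (v (sigmaSum μ α)) ^ (μ α) := by
  refine ⟨(-1 : ℂ) ^ (∑ β ∈ Finset.range p, ∑ α ∈ Finset.range β, μ α * μ β), ?_, ?_⟩
  · rcases Nat.even_or_odd (∑ β ∈ Finset.range p, ∑ α ∈ Finset.range β, μ α * μ β) with h | h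
    · exact Or.inl h.neg_one_pow
    · exact Or.inr h.neg_one_pow
  · intro e v
    have hQσ : sigmaSum μ p = Q := hQ.symm
    have hT : (Matrix.of fun i j : Fin Q =>
          ((E0mat Q p μ e ^ (j : ℕ)) *ᵥ fun k : Fin Q => v (k : ℕ)) i)
        = DetIter.Lmat Q p μ v * DetIter.Vmat p μ Q e := by
      ext i j
      show ((E0mat Q p μ e ^ (j : ℕ)) *ᵥ fun k : Fin Q => v (k : ℕ)) i = _
      have hk := congrFun (DetIter.krylov p μ Q e v (j : ℕ)) i
      rw [hk]
      rw [Matrix.mul_apply]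
      rfl
    rw [hT, Matrix.det_mul]
    have hdetV : (DetIter.Vmat p μ Q e).det = (DetIter.Mmat p μ Q e).det := by
      rw [← DetIter.VU_eq_M p μ Q e, Matrix.det_mul, DetIter.det_Umat p μ Q e, mul_one]
    rw [hdetV, DetIter.det_Mmat p μ Q e hQσ, DetIter.sign_prod p μ e,
      DetIter.det_Lmat p μ Q v hQσ]
    ring
end

section
/- Assume e₁,…,e_p are pairwise distinct and μ_p ≥ 2, and let h₀ = L₁·E₀·L₁⁻¹, where L₁ is any Q×Q lower-triangular matrix equal to the identity except in its last row, which is (c₁, c₂, …, c_{Q−1}, 1) for arbitrary complex numbers c₁,…,c_{Q−1}. Then a vector v = (v₁,…,v_Q)ᵀ ∈ ℂ^Q is cyclic with respect to h₀ (i.e. v, h₀v, …, h₀^{Q−1}v span ℂ^Q) if and only if ∏_{α=1}^p v_{σ_{α−1}+1} ≠ 0. -/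
open Matrix

/-- The lower-triangular matrix equal to the identity except in its last row,
which is `(c_1, c_2, …, c_{Q-1}, 1)`. -/
def L1mat (Q : ℕ) (c : ℕ → ℂ) : Matrix (Fin Q) (Fin Q) ℂ :=
  Matrix.of fun i j =>
    if i = j then 1
    else if (i : ℕ) = Q - 1 then c ((j : ℕ) + 1)
    else 0

lemma sigmaSum_mono (μ : ℕ → ℕ) : Monotone (sigmaSum μ) := fun a b h =>
  Finset.sum_le_sum_of_subset (Finset.range_subset_range.2 h)
lemma sigmaSum_succ (μ : ℕ → ℕ) (a : ℕ) : sigmaSum μ (a+1) = sigmaSum μ a + μ a :=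
  Finset.sum_range_succ _ _
lemma blk_le (p : ℕ) (μ : ℕ → ℕ) (i : ℕ) : blkOf p μ i ≤ p := Nat.findGreatest_le _
lemma blk_spec (p : ℕ) (μ : ℕ → ℕ) (i : ℕ) : sigmaSum μ (blkOf p μ i) ≤ i :=
  Nat.findGreatest_spec (P := fun a => sigmaSum μ a ≤ i) (Nat.zero_le p) (by simp [sigmaSum])
lemma blk_lt {p Q : ℕ} {μ : ℕ → ℕ} (hQ : Q = ∑ α ∈ Finset.range p, μ α) {i : ℕ}
    (hi : i < Q) : blkOf p μ i < p := by
  refine lt_of_le_of_ne (blk_le p μ i) ?_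
  intro h
  have := blk_spec p μ i
  rw [h] at this
  have : Q ≤ i := by simpa [sigmaSum, ← hQ] using this
  omega
lemma blk_upper {p Q : ℕ} {μ : ℕ → ℕ} (hQ : Q = ∑ α ∈ Finset.range p, μ α) {i : ℕ}
    (hi : i < Q) : i < sigmaSum μ (blkOf p μ i + 1) := by
  have h1 : blkOf p μ i + 1 ≤ p := blk_lt hQ hi
  have := Nat.findGreatest_is_greatest (P := fun a => sigmaSum μ a ≤ i)
    (Nat.lt_succ_self _) h1
  exact Nat.lt_of_not_le this
lemma blk_eq {p : ℕ} {μ : ℕ → ℕ} {a j : ℕ} (ha : a ≤ p)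
    (h1 : sigmaSum μ a ≤ j) (h2 : j < sigmaSum μ (a+1)) : blkOf p μ j = a := by
  have hge : a ≤ blkOf p μ j := Nat.le_findGreatest ha h1
  have hle : blkOf p μ j ≤ a := by
    by_contra h
    have : a + 1 ≤ blkOf p μ j := by omega
    have := (sigmaSum_mono μ this).trans (blk_spec p μ j)
    omega
  omega

/-- successor stays in the same block -/
lemma blk_succ {p Q : ℕ} {μ : ℕ → ℕ} (hQ : Q = ∑ α ∈ Finset.range p, μ α) {j i : ℕ}
    (hij : j < i) (hi : i < Q) (hb : blkOf p μ j = blkOf p μ i) :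
    blkOf p μ (j + 1) = blkOf p μ j := by
  have h1 : sigmaSum μ (blkOf p μ j) ≤ j + 1 := (blk_spec p μ j).trans (by omega)
  have h2 : j + 1 < sigmaSum μ (blkOf p μ j + 1) := by
    have := blk_upper hQ hi
    rw [← hb] at this
    omega
  exact blk_eq (blk_le p μ j) h1 h2

def Nmat (Q p : ℕ) (μ : ℕ → ℕ) : Matrix (Fin Q) (Fin Q) ℂ :=
  Matrix.of fun i j =>
    if (i : ℕ) = (j : ℕ) + 1 ∧ blkOf p μ (i : ℕ) = blkOf p μ (j : ℕ) then 1 else 0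

lemma E0_decomp (Q p : ℕ) (μ : ℕ → ℕ) (e : ℕ → ℂ) :
    E0mat Q p μ e = Matrix.diagonal (fun i : Fin Q => e (blkOf p μ (i : ℕ))) + Nmat Q p μ := by
  ext i j
  simp only [E0mat, Nmat, Matrix.add_apply, Matrix.diagonal_apply, Matrix.of_apply]
  rcases eq_or_ne i j with h | h
  · subst h; simp
  · simp [h]

def Amat (Q p : ℕ) (μ : ℕ → ℕ) (e : ℕ → ℂ) (k : ℕ) : Matrix (Fin Q) (Fin Q) ℂ :=
  Matrix.of fun i j =>
    if blkOf p μ (j : ℕ) = blkOf p μ (i : ℕ) ∧ (j : ℕ) ≤ (i : ℕ) then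
      (Nat.choose k ((i : ℕ) - (j : ℕ)) : ℂ) * e (blkOf p μ (i : ℕ)) ^ (k - ((i : ℕ) - (j : ℕ)))
    else 0

lemma Epow {Q p : ℕ} {μ : ℕ → ℕ} (hQ : Q = ∑ α ∈ Finset.range p, μ α) (e : ℕ → ℂ) (k : ℕ) :
    E0mat Q p μ e ^ k = Amat Q p μ e k := by
  induction k with
  | zero =>
    ext i j
    rw [pow_zero]
    simp only [Amat, Matrix.of_apply]
    rcases eq_or_ne i j with h | h
    · subst h; simp
    · rw [Matrix.one_apply_ne h]
      have hne : (j : ℕ) ≠ (i : ℕ) := fun hh => h (Fin.ext hh.symm)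
      by_cases hc : blkOf p μ (j : ℕ) = blkOf p μ (i : ℕ) ∧ (j : ℕ) ≤ (i : ℕ)
      · rw [if_pos hc, Nat.choose_eq_zero_of_lt (by omega)]
        simp
      · rw [if_neg hc]
  | succ k ih =>
    rw [pow_succ, ih, E0_decomp, Matrix.mul_add]
    ext i j
    have hiQ : (i : ℕ) < Q := i.isLt
    rw [Matrix.add_apply, Matrix.mul_diagonal]
    -- compute (A k * N) i j
    have hN : (Amat Q p μ e k * Nmat Q p μ) i j
        = if h : (j : ℕ) + 1 < Q ∧ blkOf p μ ((j : ℕ) + 1) = blkOf p μ (j : ℕ) then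
            Amat Q p μ e k i ⟨(j : ℕ) + 1, h.1⟩ else 0 := by
      rw [Matrix.mul_apply]
      split
      · next h =>
        refine Finset.sum_eq_single_of_mem ⟨(j : ℕ) + 1, h.1⟩ (Finset.mem_univ _) ?_ |>.trans ?_
        · intro m _ hm
          have : ¬ ((m : ℕ) = (j : ℕ) + 1 ∧ blkOf p μ (m : ℕ) = blkOf p μ (j : ℕ)) := by
            intro hc
            exact hm (Fin.ext hc.1)
          simp [Nmat, this]
        · simp [Nmat, h.2]
      · next h =>
        refine Finset.sum_eq_zero fun m _ => ?_
        have : ¬ ((m : ℕ) = (j : ℕ) + 1 ∧ blkOf p μ (m : ℕ) = blkOf p μ (j : ℕ)) := by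
          intro hc
          exact h ⟨hc.1 ▸ m.isLt, hc.1 ▸ hc.2⟩
        simp [Nmat, this]
    rw [hN]
    simp only [Amat, Matrix.of_apply]
    by_cases hc : blkOf p μ (j : ℕ) = blkOf p μ (i : ℕ) ∧ (j : ℕ) ≤ (i : ℕ)
    · rw [if_pos hc]
      rcases Nat.eq_or_lt_of_le hc.2 with hji | hji
      · -- j = i
        have h0 : (i : ℕ) - (j : ℕ) = 0 := by omega
        rw [h0]
        have : ∀ hh : ((j:ℕ)+1 < Q ∧ blkOf p μ ((j:ℕ)+1) = blkOf p μ (j:ℕ)),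
            ¬ (blkOf p μ ((⟨(j:ℕ)+1, hh.1⟩ : Fin Q) : ℕ) = blkOf p μ (i : ℕ)
               ∧ ((⟨(j:ℕ)+1, hh.1⟩ : Fin Q) : ℕ) ≤ (i : ℕ)) := by
          intro hh hcc
          have := hcc.2
          simp only at this
          omega
        rw [if_pos hc]
        have hz : (if h : (j : ℕ) + 1 < Q ∧ blkOf p μ ((j : ℕ) + 1) = blkOf p μ (j : ℕ) then
            (if blkOf p μ (((⟨(j:ℕ)+1, h.1⟩ : Fin Q)) : ℕ) = blkOf p μ (i : ℕ)
               ∧ (((⟨(j:ℕ)+1, h.1⟩ : Fin Q)) : ℕ) ≤ (i : ℕ) then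
              (Nat.choose k ((i : ℕ) - (((⟨(j:ℕ)+1, h.1⟩ : Fin Q)) : ℕ)) : ℂ)
                * e (blkOf p μ (i : ℕ)) ^ (k - ((i : ℕ) - (((⟨(j:ℕ)+1, h.1⟩ : Fin Q)) : ℕ)))
             else 0) else 0) = 0 := by
          split
          · next h => rw [if_neg (this h)]
          · rfl
        rw [hz, hc.1]
        simp [pow_succ]
      · -- j < i
        have hcond : (j : ℕ) + 1 < Q ∧ blkOf p μ ((j : ℕ) + 1) = blkOf p μ (j : ℕ) :=
          ⟨by omega, blk_succ hQ hji hiQ hc.1⟩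
        rw [dif_pos hcond, if_pos hc]
        have hcond2 : blkOf p μ (((⟨(j:ℕ)+1, hcond.1⟩ : Fin Q)) : ℕ) = blkOf p μ (i : ℕ)
            ∧ (((⟨(j:ℕ)+1, hcond.1⟩ : Fin Q)) : ℕ) ≤ (i : ℕ) := by
          refine ⟨?_, by exact hji⟩
          show blkOf p μ ((j:ℕ)+1) = _
          rw [hcond.2, hc.1]
        rw [if_pos hcond2]
        show (Nat.choose k ((i:ℕ) - (j:ℕ)) : ℂ) * e (blkOf p μ (i:ℕ)) ^ (k - ((i:ℕ) - (j:ℕ))) * e (blkOf p μ (j:ℕ)) + (Nat.choose k ((i:ℕ) - ((j:ℕ)+1)) : ℂ) * e (blkOf p μ (i:ℕ)) ^ (k - ((i:ℕ) - ((j:ℕ)+1))) = (Nat.choose (k+1) ((i:ℕ) - (j:ℕ)) : ℂ) * e (blkOf p μ (i:ℕ)) ^ (k+1 - ((i:ℕ) - (j:ℕ)))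
        obtain ⟨sN, hs⟩ : ∃ sN, (i : ℕ) - (j : ℕ) = sN + 1 := ⟨(i:ℕ) - (j:ℕ) - 1, by omega⟩
        have hr1 : (i : ℕ) - ((j : ℕ) + 1) = sN := by omega
        rw [hs, hr1, hc.1]
        have hpascal : (k+1).choose (sN+1) = k.choose (sN+1) + k.choose sN := by
          rw [Nat.choose_succ_succ']
          exact Nat.add_comm _ _
        rcases lt_or_ge sN k with hrk | hrk
        · have e1 : k + 1 - (sN + 1) = (k - (sN+1)) + 1 := by omega
          have e2 : k - sN = (k - (sN+1)) + 1 := by omega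
          rw [hpascal, e1, e2]
          push_cast
          ring
        · rcases Nat.eq_or_lt_of_le hrk with hre | hre
          · have e1 : k + 1 - (sN + 1) = 0 := by omega
            have e2 : k - sN = 0 := by omega
            have h1 : k.choose (sN+1) = 0 := Nat.choose_eq_zero_of_lt (by omega)
            rw [hpascal, e1, e2, h1, ← hre]
            simp
          · have h0 : (k+1).choose (sN+1) = 0 := Nat.choose_eq_zero_of_lt (by omega)
            have h1 : k.choose (sN+1) = 0 := Nat.choose_eq_zero_of_lt (by omega)
            have h2 : k.choose sN = 0 := Nat.choose_eq_zero_of_lt (by omega)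
            rw [h0, h1, h2]
            simp
    · rw [if_neg hc, if_neg hc]
      have hz : (if h : (j : ℕ) + 1 < Q ∧ blkOf p μ ((j : ℕ) + 1) = blkOf p μ (j : ℕ) then
          (if blkOf p μ (((⟨(j:ℕ)+1, h.1⟩ : Fin Q)) : ℕ) = blkOf p μ (i : ℕ)
             ∧ (((⟨(j:ℕ)+1, h.1⟩ : Fin Q)) : ℕ) ≤ (i : ℕ) then
            (Nat.choose k ((i : ℕ) - (((⟨(j:ℕ)+1, h.1⟩ : Fin Q)) : ℕ)) : ℂ)
              * e (blkOf p μ (i : ℕ)) ^ (k - ((i : ℕ) - (((⟨(j:ℕ)+1, h.1⟩ : Fin Q)) : ℕ)))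
           else 0) else 0) = 0 := by
        split
        · next h =>
          rw [if_neg]
          intro hcc
          simp only at hcc
          rw [h.2] at hcc
          exact hc ⟨hcc.1, by omega⟩
        · rfl
      rw [hz]
      ring

def Tmat (Q p : ℕ) (μ : ℕ → ℕ) (w : ℕ → ℂ) : Matrix (Fin Q) (Fin Q) ℂ :=
  Matrix.of fun i m =>
    if blkOf p μ (m : ℕ) = blkOf p μ (i : ℕ) ∧ (m : ℕ) ≤ (i : ℕ) then
      w (sigmaSum μ (blkOf p μ (i : ℕ)) + ((i : ℕ) - (m : ℕ)))
    else 0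

def Rmat (Q p : ℕ) (μ : ℕ → ℕ) (e : ℕ → ℂ) : Matrix (Fin Q) (Fin Q) ℂ :=
  Matrix.of fun m k =>
    (Nat.choose (k : ℕ) ((m : ℕ) - sigmaSum μ (blkOf p μ (m : ℕ))) : ℂ) *
      e (blkOf p μ (m : ℕ)) ^ ((k : ℕ) - ((m : ℕ) - sigmaSum μ (blkOf p μ (m : ℕ))))

lemma TR_eq {Q p : ℕ} {μ : ℕ → ℕ} (hQ : Q = ∑ α ∈ Finset.range p, μ α) (e : ℕ → ℂ)
    (w : ℕ → ℂ) (i k : Fin Q) :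
    (Tmat Q p μ w * Rmat Q p μ e) i k
      = ∑ j : Fin Q, Amat Q p μ e (k : ℕ) i j * w (j : ℕ) := by
  rw [Matrix.mul_apply]
  refine Finset.sum_nbij'
    (i := fun m : Fin Q =>
      if h : blkOf p μ (m : ℕ) = blkOf p μ (i : ℕ) ∧ (m : ℕ) ≤ (i : ℕ) then
        (⟨sigmaSum μ (blkOf p μ (i : ℕ)) + ((i : ℕ) - (m : ℕ)), by
          have h1 := blk_spec p μ (m : ℕ)
          rw [h.1] at h1
          have h2 := i.isLt
          omega⟩ : Fin Q)
      else m)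
    (j := fun m : Fin Q =>
      if h : blkOf p μ (m : ℕ) = blkOf p μ (i : ℕ) ∧ (m : ℕ) ≤ (i : ℕ) then
        (⟨sigmaSum μ (blkOf p μ (i : ℕ)) + ((i : ℕ) - (m : ℕ)), by
          have h1 := blk_spec p μ (m : ℕ)
          rw [h.1] at h1
          have h2 := i.isLt
          omega⟩ : Fin Q)
      else m)
    (fun a _ => Finset.mem_univ _) (fun a _ => Finset.mem_univ _)
    ?_ ?_ ?_
  all_goals
    intro m _
  -- key auxiliary facts
  all_goals
    by_cases hm : blkOf p μ (m : ℕ) = blkOf p μ (i : ℕ) ∧ (m : ℕ) ≤ (i : ℕ)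
  -- in-set cases first need the image facts
  case pos =>
    -- left_inv
    have h1 := blk_spec p μ (m : ℕ)
    rw [hm.1] at h1
    have hji : sigmaSum μ (blkOf p μ (i : ℕ)) + ((i : ℕ) - (m : ℕ)) ≤ (i : ℕ) := by omega
    have hb : blkOf p μ (sigmaSum μ (blkOf p μ (i : ℕ)) + ((i : ℕ) - (m : ℕ)))
        = blkOf p μ (i : ℕ) := by
      refine blk_eq (blk_le p μ _) (by omega) ?_
      have := blk_upper hQ i.isLt
      omega
    beta_reduce
    rw [dif_pos hm, dif_pos (by exact ⟨hb, hji⟩)]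
    apply Fin.ext
    simp only
    omega
  case neg =>
    beta_reduce
    rw [dif_neg hm, dif_neg hm]
  case pos =>
    have h1 := blk_spec p μ (m : ℕ)
    rw [hm.1] at h1
    have hji : sigmaSum μ (blkOf p μ (i : ℕ)) + ((i : ℕ) - (m : ℕ)) ≤ (i : ℕ) := by omega
    have hb : blkOf p μ (sigmaSum μ (blkOf p μ (i : ℕ)) + ((i : ℕ) - (m : ℕ)))
        = blkOf p μ (i : ℕ) := by
      refine blk_eq (blk_le p μ _) (by omega) ?_
      have := blk_upper hQ i.isLt
      omega
    beta_reduce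
    rw [dif_pos hm, dif_pos (by exact ⟨hb, hji⟩)]
    apply Fin.ext
    simp only
    omega
  case neg =>
    beta_reduce
    rw [dif_neg hm, dif_neg hm]
  case pos =>
    -- main term equality
    have h1 := blk_spec p μ (m : ℕ)
    rw [hm.1] at h1
    have hji : sigmaSum μ (blkOf p μ (i : ℕ)) + ((i : ℕ) - (m : ℕ)) ≤ (i : ℕ) := by omega
    have hb : blkOf p μ (sigmaSum μ (blkOf p μ (i : ℕ)) + ((i : ℕ) - (m : ℕ)))
        = blkOf p μ (i : ℕ) := by
      refine blk_eq (blk_le p μ _) (by omega) ?_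
      have := blk_upper hQ i.isLt
      omega
    beta_reduce
    rw [dif_pos hm]
    simp only [Tmat, Rmat, Amat, Matrix.of_apply]
    rw [if_pos hm, if_pos (by exact ⟨hb, hji⟩)]
    rw [hm.1]
    have harith : (i : ℕ) - (sigmaSum μ (blkOf p μ (i : ℕ)) + ((i : ℕ) - (m : ℕ)))
        = (m : ℕ) - sigmaSum μ (blkOf p μ (i : ℕ)) := by omega
    rw [harith]
    ring
  case neg =>
    beta_reduce
    rw [dif_neg hm]
    simp only [Tmat, Rmat, Amat, Matrix.of_apply]
    rw [if_neg hm, if_neg hm]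
    ring

open Polynomial in
/-- If the first `n` Hasse derivatives of `f` vanish at `r`, then `(X - C r)^n ∣ f`. -/
lemma dvd_of_hasseDeriv_eval_eq_zero (f : Polynomial ℂ) (r : ℂ) (n : ℕ)
    (h : ∀ d < n, (Polynomial.hasseDeriv d f).eval r = 0) :
    (X - C r) ^ n ∣ f := by
  have hX : X ^ n ∣ taylor r f := by
    rw [X_pow_dvd_iff]
    intro d hd
    rw [taylor_coeff]
    exact h d hd
  obtain ⟨g, hg⟩ := hX
  refine ⟨g.comp (X - C r), ?_⟩
  have : f = (taylor r f).comp (X - C r) := by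
    rw [taylor_apply, comp_assoc]
    simp
  rw [this, hg, mul_comp, pow_comp, X_comp]

open Polynomial in
lemma Rmat_det_ne_zero {Q p : ℕ} (hp : 1 ≤ p) {μ : ℕ → ℕ} (hμ : ∀ α < p, 0 < μ α)
    (hQ : Q = ∑ α ∈ Finset.range p, μ α) {e : ℕ → ℂ}
    (he : ∀ α < p, ∀ β < p, α ≠ β → e α ≠ e β) :
    (Rmat Q p μ e).det ≠ 0 := by
  intro hdet
  obtain ⟨x, hx0, hx⟩ := (Matrix.exists_mulVec_eq_zero_iff).2 hdet
  apply hx0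
  -- the polynomial with coefficients x
  set P : Polynomial ℂ := ∑ k : Fin Q, C (x k) * X ^ (k : ℕ) with hP
  -- hasse derivative evaluations vanish
  have hσp : sigmaSum μ p = Q := by rw [hQ]; rfl
  have hval : ∀ α < p, ∀ j < μ α, (hasseDeriv j P).eval (e α) = 0 := by
    intro α hα j hj
    have hlt : sigmaSum μ α + j < Q := by
      have h1 : sigmaSum μ α + j < sigmaSum μ (α + 1) := by
        rw [sigmaSum_succ]; omega
      have h2 : sigmaSum μ (α+1) ≤ Q := hσp ▸ sigmaSum_mono μ hα
      omega
    set m : Fin Q := ⟨sigmaSum μ α + j, hlt⟩ with hm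
    have hbm : blkOf p μ (m : ℕ) = α := by
      refine blk_eq (le_of_lt hα) (by simp [hm]) ?_
      rw [sigmaSum_succ]
      simp only [hm]
      omega
    have hmv := congrFun hx m
    rw [Matrix.mulVec, Pi.zero_apply] at hmv
    have hdot : (Rmat Q p μ e).mulVec x m = ∑ k : Fin Q, Rmat Q p μ e m k * x k := by
      rfl
    rw [hP, map_sum]
    rw [eval_finset_sum]
    have hoff : (m : ℕ) - sigmaSum μ (blkOf p μ (m : ℕ)) = j := by
      rw [hbm]; simp [hm]
    calc (∑ k : Fin Q, ((hasseDeriv j) (C (x k) * X ^ (k:ℕ))).eval (e α))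
        = ∑ k : Fin Q, Rmat Q p μ e m k * x k := by
          refine Finset.sum_congr rfl fun k _ => ?_
          rw [C_mul_X_pow_eq_monomial, hasseDeriv_monomial, eval_monomial]
          simp only [Rmat, Matrix.of_apply, hoff, hbm]
          rw [show sigmaSum μ α + j - sigmaSum μ α = j from by omega]
          ring
      _ = 0 := by rw [← hdot]; exact hmv
  -- divisibility by the full product
  have hdvd : (∏ α ∈ Finset.range p, (X - C (e α)) ^ μ α) ∣ P := by
    refine Finset.prod_dvd_of_coprime ?_ ?_
    · intro α hα β hβ hαβ
      have : IsCoprime (X - C (e α)) (X - C (e β)) := by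
        refine isCoprime_X_sub_C_of_isUnit_sub ?_
        exact (sub_ne_zero_of_ne (he α (Finset.mem_coe.1 hα |> Finset.mem_range.1)
          β (Finset.mem_coe.1 hβ |> Finset.mem_range.1) hαβ)).isUnit
      exact (this.pow : _)
    · intro α hα
      refine dvd_of_hasseDeriv_eval_eq_zero P (e α) (μ α) ?_
      exact fun d hd => hval α (Finset.mem_range.1 hα) d hd
  -- degrees
  have hQpos : 0 < Q := by
    rw [hQ]
    calc 0 < μ 0 := hμ 0 hp
    _ ≤ ∑ α ∈ Finset.range p, μ α := Finset.single_le_sum (fun _ _ => Nat.zero_le _)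
        (Finset.mem_range.2 hp)
  have hmonic : (∏ α ∈ Finset.range p, (X - C (e α)) ^ μ α).Monic :=
    monic_prod_of_monic _ _ fun α _ => (monic_X_sub_C _).pow _
  have hdeg : (∏ α ∈ Finset.range p, (X - C (e α)) ^ μ α).natDegree = Q := by
    rw [natDegree_prod _ _ fun α _ => pow_ne_zero _ (X_sub_C_ne_zero _)]
    rw [hQ]
    exact Finset.sum_congr rfl fun α _ => by
      rw [natDegree_pow, natDegree_X_sub_C, mul_one]
  have hdegP : P.natDegree ≤ Q - 1 := by
    refine natDegree_sum_le_of_forall_le _ _ fun k _ => ?_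
    exact (natDegree_C_mul_X_pow_le _ _).trans (by omega)
  have hPzero : P = 0 := by
    refine eq_zero_of_dvd_of_degree_lt hdvd ?_
    rw [degree_eq_natDegree hmonic.ne_zero, hdeg]
    refine lt_of_le_of_lt degree_le_natDegree ?_
    exact_mod_cast (by omega : P.natDegree < Q)
  -- coefficients vanish
  funext k
  have hc : P.coeff (k : ℕ) = x k := by
    rw [hP, finset_sum_coeff]
    rw [Finset.sum_congr rfl (fun k' _ => by
      rw [coeff_C_mul, coeff_X_pow, mul_ite, mul_one, mul_zero])]
    refine (Finset.sum_eq_single k ?_ ?_).trans ?_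
    · intro k' _ hne
      rw [if_neg (fun h => hne (Fin.ext h.symm))]
    · intro h
      exact absurd (Finset.mem_univ _) h
    · rw [if_pos rfl]
  show x k = 0
  rw [← hc, hPzero, Polynomial.coeff_zero]

def L1inv (Q : ℕ) (c : ℕ → ℂ) : Matrix (Fin Q) (Fin Q) ℂ :=
  Matrix.of fun i j =>
    if i = j then 1
    else if (i : ℕ) = Q - 1 then -c ((j : ℕ) + 1)
    else 0

lemma Tmat_det {Q p : ℕ} {μ : ℕ → ℕ} (w : ℕ → ℂ) :
    (Tmat Q p μ w).det = ∏ i : Fin Q, w (sigmaSum μ (blkOf p μ (i : ℕ))) := by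
  rw [Matrix.det_of_lowerTriangular]
  · exact Finset.prod_congr rfl fun i _ => by simp [Tmat]
  · intro i j hij
    have hij' : (i : ℕ) < (j : ℕ) := OrderDual.toDual_lt_toDual.1 hij
    simp only [Tmat, Matrix.of_apply]
    rw [if_neg]
    intro hcc
    omega

lemma L1_det {Q : ℕ} (c : ℕ → ℂ) : (L1mat Q c).det = 1 := by
  rw [Matrix.det_of_lowerTriangular]
  · refine Finset.prod_eq_one fun i _ => by simp [L1mat]
  · intro i j hij
    have hij' : (i : ℕ) < (j : ℕ) := OrderDual.toDual_lt_toDual.1 hij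
    simp only [L1mat, Matrix.of_apply]
    rw [if_neg (by intro h; subst h; omega), if_neg (by omega)]

lemma L1_mul_L1inv (Q : ℕ) (c : ℕ → ℂ) : L1mat Q c * L1inv Q c = 1 := by
  ext i j
  rw [Matrix.mul_apply]
  by_cases hi : (i : ℕ) = Q - 1
  · rw [← Finset.add_sum_erase _ _ (Finset.mem_univ i)]
    have h1 : L1mat Q c i i = 1 := by simp [L1mat]
    rw [h1, one_mul]
    rw [Finset.sum_congr rfl (fun m hm => show L1mat Q c i m * L1inv Q c m j
        = if m = j then c ((m : ℕ) + 1) else 0 from by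
      have hmi : m ≠ i := (Finset.mem_erase.1 hm).1
      have hmQ : (m : ℕ) ≠ Q - 1 := fun h => hmi (Fin.ext (h.trans hi.symm))
      have him : ¬ i = m := fun h => hmi h.symm
      have h2 : L1mat Q c i m = c ((m : ℕ) + 1) := by
        simp [L1mat, hi, him]
      have h3 : L1inv Q c m j = if m = j then 1 else 0 := by
        simp [L1inv, hmQ]
      rw [h2, h3, mul_ite, mul_one, mul_zero])]
    rw [Finset.sum_ite_eq' (Finset.univ.erase i) j fun m => c ((m : ℕ) + 1)]
    rcases eq_or_ne i j with hij | hij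
    · subst hij
      rw [if_neg (by simp), Matrix.one_apply_eq]
      simp [L1inv]
    · rw [if_pos (Finset.mem_erase.2 ⟨hij.symm ∘ Eq.symm ∘ id ∘ Eq.symm, Finset.mem_univ _⟩),
        Matrix.one_apply_ne hij]
      simp [L1inv, hij, hi]
  · rw [Finset.sum_congr rfl (fun m _ => show L1mat Q c i m * L1inv Q c m j
        = if i = m then L1inv Q c m j else 0 from by
      have : L1mat Q c i m = if i = m then 1 else 0 := by simp [L1mat, hi]
      rw [this, ite_mul, one_mul, zero_mul])]
    rw [Finset.sum_ite_eq]
    simp only [Finset.mem_univ, if_true]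
    rcases eq_or_ne i j with hij | hij
    · subst hij; simp [L1inv, Matrix.one_apply_eq]
    · rw [Matrix.one_apply_ne hij]
      simp [L1inv, hij, hi]


/-- A vector `v` is cyclic for `h₀ = L₁·E₀·L₁⁻¹` if and only if
`∏_{α=1}^p v_{σ_{α-1}+1} ≠ 0`, provided the `e_α` are pairwise distinct and `μ_p ≥ 2`. -/
theorem cyclic_iff_prod_ne_zero
    (p Q : ℕ) (hp : 1 ≤ p) (μ : ℕ → ℕ) (hμ : ∀ α < p, 0 < μ α)
    (hQ : Q = ∑ α ∈ Finset.range p, μ α)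
    (e : ℕ → ℂ) (he : ∀ α < p, ∀ β < p, α ≠ β → e α ≠ e β)
    (hμp : 2 ≤ μ (p - 1))
    (c : ℕ → ℂ) (v : ℕ → ℂ) :
    Submodule.span ℂ (Set.range fun i : Fin Q =>
        ((L1mat Q c * E0mat Q p μ e * (L1mat Q c)⁻¹) ^ (i : ℕ)) *ᵥ fun k : Fin Q => v (k : ℕ))
      = ⊤
    ↔ (∏ α ∈ Finset.range p, v (sigmaSum μ α)) ≠ 0 := by
  classical
  have hLL : L1mat Q c * L1inv Q c = 1 := L1_mul_L1inv Q c
  have hLinv : (L1mat Q c)⁻¹ = L1inv Q c := Matrix.inv_eq_right_inv hLL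
  have hL'L : L1inv Q c * L1mat Q c = 1 := mul_eq_one_comm.1 hLL
  set E := E0mat Q p μ e with hE
  set L := L1mat Q c with hL
  set vvec : Fin Q → ℂ := fun k : Fin Q => v (k : ℕ) with hvvec
  set w : ℕ → ℂ := fun n => if h : n < Q then (L1inv Q c *ᵥ vvec) ⟨n, h⟩ else 0 with hw
  have hwvec : (fun j : Fin Q => w (j : ℕ)) = L1inv Q c *ᵥ vvec := by
    funext j
    simp only [hw]
    rw [dif_pos j.isLt]
  have hpow : ∀ k : ℕ, (L * E * L⁻¹) ^ k = L * E ^ k * L1inv Q c := by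
    intro k
    rw [hLinv]
    induction k with
    | zero => rw [pow_zero, pow_zero, Matrix.mul_one, hLL]
    | succ k ih =>
      rw [pow_succ, pow_succ, ih]
      calc (L * E ^ k * L1inv Q c) * (L * E * L1inv Q c)
          = L * E ^ k * ((L1inv Q c * L) * (E * L1inv Q c)) := by
            simp only [Matrix.mul_assoc]
        _ = L * (E ^ k * E) * L1inv Q c := by
            rw [hL'L, Matrix.one_mul]
            simp only [Matrix.mul_assoc]
  set K : Matrix (Fin Q) (Fin Q) ℂ :=
    Matrix.of (fun i k : Fin Q => (((L * E * L⁻¹) ^ (k : ℕ)) *ᵥ vvec) i) with hK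
  have htrans : Kᵀ = fun i : Fin Q => ((L * E * L⁻¹) ^ (i : ℕ)) *ᵥ vvec := rfl
  have hspan : (Submodule.span ℂ (Set.range fun i : Fin Q =>
        ((L * E * L⁻¹) ^ (i : ℕ)) *ᵥ vvec) = ⊤) ↔ K.det ≠ 0 := by
    rw [← htrans]
    show Submodule.span ℂ (Set.range K.col) = ⊤ ↔ K.det ≠ 0
    rw [← Matrix.range_mulVecLin, LinearMap.range_eq_top]
    have hfun : ⇑K.mulVecLin = K.mulVec := rfl
    rw [hfun, Matrix.mulVec_surjective_iff_isUnit, Matrix.isUnit_iff_isUnit_det,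
      isUnit_iff_ne_zero]
  have hKfact : K = L * (Tmat Q p μ w * Rmat Q p μ e) := by
    ext i k
    show (((L * E * L⁻¹) ^ (k : ℕ)) *ᵥ vvec) i = _
    rw [hpow (k : ℕ), ← Matrix.mulVec_mulVec, ← Matrix.mulVec_mulVec, ← hwvec]
    have hcol : ∀ j : Fin Q, (E ^ (k : ℕ) *ᵥ fun m : Fin Q => w (m : ℕ)) j
        = (Tmat Q p μ w * Rmat Q p μ e) j k := by
      intro j
      rw [TR_eq hQ e w j k, hE, Epow hQ e]
      simp only [Matrix.mulVec, dotProduct]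
    calc (L *ᵥ (E ^ (k : ℕ) *ᵥ fun m : Fin Q => w (m : ℕ))) i
        = ∑ j, L i j * (E ^ (k : ℕ) *ᵥ fun m : Fin Q => w (m : ℕ)) j := by
          simp only [Matrix.mulVec, dotProduct]
      _ = ∑ j, L i j * (Tmat Q p μ w * Rmat Q p μ e) j k :=
          Finset.sum_congr rfl fun j _ => by rw [hcol j]
      _ = (L * (Tmat Q p μ w * Rmat Q p μ e)) i k := (Matrix.mul_apply).symm
  have hdetK : K.det = (Tmat Q p μ w).det * (Rmat Q p μ e).det := by
    rw [hKfact, Matrix.det_mul, Matrix.det_mul, hL, L1_det, one_mul]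
  have hσp : sigmaSum μ p = Q := by rw [hQ]; rfl
  have hσle : ∀ α, α < p → sigmaSum μ α + μ (p - 1) ≤ Q := by
    intro α hα
    have h1 : sigmaSum μ α ≤ sigmaSum μ (p - 1) := sigmaSum_mono μ (by omega)
    have h2 : sigmaSum μ (p - 1) + μ (p - 1) = Q := by
      rw [← sigmaSum_succ, show p - 1 + 1 = p from by omega]
      exact hσp
    omega
  have hwv : ∀ α, α < p → w (sigmaSum μ α) = v (sigmaSum μ α) := by
    intro α hα
    have hσα := hσle α hα
    have hlt : sigmaSum μ α < Q := by omega
    have hne : sigmaSum μ α ≠ Q - 1 := by omega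
    simp only [hw]
    rw [dif_pos hlt]
    have hrow : ∀ m : Fin Q, L1inv Q c (⟨sigmaSum μ α, hlt⟩ : Fin Q) m
        = if (⟨sigmaSum μ α, hlt⟩ : Fin Q) = m then 1 else 0 := by
      intro m
      simp [L1inv, hne]
    calc (L1inv Q c *ᵥ vvec) ⟨sigmaSum μ α, hlt⟩
        = ∑ m, L1inv Q c ⟨sigmaSum μ α, hlt⟩ m * vvec m := by
          simp only [Matrix.mulVec, dotProduct]
      _ = v (sigmaSum μ α) := by
          rw [Finset.sum_congr rfl fun m _ => by rw [hrow m, ite_mul, one_mul, zero_mul]]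
          rw [Finset.sum_ite_eq]
          simp [hvvec]
  have hR := Rmat_det_ne_zero hp hμ hQ he
  have hiff1 : (∏ i : Fin Q, w (sigmaSum μ (blkOf p μ (i : ℕ)))) ≠ 0
      ↔ ∀ α, α < p → v (sigmaSum μ α) ≠ 0 := by
    rw [Finset.prod_ne_zero_iff]
    constructor
    · intro h α hα
      have hσα := hσle α hα
      have hlt : sigmaSum μ α < Q := by omega
      have hblk : blkOf p μ (sigmaSum μ α) = α := by
        refine blk_eq (le_of_lt hα) le_rfl ?_
        rw [sigmaSum_succ]
        have := hμ α hα
        omega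
      have := h ⟨sigmaSum μ α, hlt⟩ (Finset.mem_univ _)
      rw [show ((⟨sigmaSum μ α, hlt⟩ : Fin Q) : ℕ) = sigmaSum μ α from rfl, hblk,
        hwv α hα] at this
      exact this
    · intro h i _
      have hb : blkOf p μ (i : ℕ) < p := blk_lt hQ i.isLt
      rw [hwv _ hb]
      exact h _ hb
  have hiff2 : (∏ α ∈ Finset.range p, v (sigmaSum μ α)) ≠ 0
      ↔ ∀ α, α < p → v (sigmaSum μ α) ≠ 0 := by
    rw [Finset.prod_ne_zero_iff]
    exact ⟨fun h α hα => h α (Finset.mem_range.2 hα),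
      fun h α hα => h α (Finset.mem_range.1 hα)⟩
  rw [hspan, hdetK, Tmat_det w, hiff2]
  constructor
  · intro h
    exact hiff1.1 (left_ne_zero_of_mul h)
  · intro h
    exact mul_ne_zero (hiff1.2 h) hR
end
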